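/- arXiv:math/0407016 — 6 statements merged into one kernel-verified Lean document; each statement's English description precedes it below -/
import Mathlib

section
/- Let q ≥ 1 and n ≥ 1. The number of Lyndon words of length n over a totally ordered alphabet with q letters equals (1/n)·Σ_{d | n} μ(d)·q^{n/d}, where μ is the Möbius function and the sum is over the positive divisors d of n. -/
open scoped Classical

/-- A Lyndon word: strictly smaller, in lexicographic order, than each of its
proper (nonempty) suffixes. -/
def IsLyndon {α : Type*} [LinearOrder α] (w : List α) : Prop :=
  ∀ i, 0 < i → i < w.length → List.Lex (· < ·) w (w.drop i)

/-- The finite set of Lyndon words of length `n` over a totally ordered alphabet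
with `q` letters, encoded as functions `Fin n → Fin q`. -/
noncomputable def lyndonWords (q n : ℕ) : Finset (Fin n → Fin q) :=
  Finset.univ.filter fun w => IsLyndon (List.ofFn w)

section Aux
open List

def Prim {β : Type*} (w : List β) : Prop :=
  ∀ r, 0 < r → r < w.length → w.rotate r ≠ w

variable {α : Type*} [LinearOrder α]

local notation l " ≺ " l' => List.Lex (· < ·) l l'

/-- A word is never Lex-smaller than its own prefix. -/
lemma not_lex_append (s t : List α) : ¬ List.Lex (· < ·) (s ++ t) s := by
  induction s with
  | nil => exact List.not_lex_nil
  | cons a s ih =>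
    intro h
    rcases h with h | h
    · exact lt_irrefl a ‹_›
    · exact ih ‹_›

lemma lex_append_left {t p : List α} (s : List α) (h : List.Lex (· < ·) t p) :
    List.Lex (· < ·) (s ++ t) (s ++ p) := by
  induction s with
  | nil => exact h
  | cons a s ih => exact List.Lex.cons ih

lemma lex_of_lex_append {s t p : List α} (h : List.Lex (· < ·) (s ++ t) (s ++ p)) :
    List.Lex (· < ·) t p := by
  induction s with
  | nil => exact h
  | cons a s ih =>
    rcases h with h | h
    · exact absurd ‹a < a› (lt_irrefl a)
    · exact ih ‹_›

/-- appending on the right preserves Lex when lengths are equal -/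
lemma lex_append_right {t p : List α} (h : List.Lex (· < ·) t p) (hl : t.length = p.length)
    (s : List α) : List.Lex (· < ·) (t ++ s) (p ++ s) := by
  induction h with
  | nil => simp at hl
  | @cons a l1 l2 h ih => exact List.Lex.cons (ih (by simpa using hl))
  | rel h => exact List.Lex.rel h

/-- If `u` is smaller than a shorter word `s`, it is smaller than any extension of `s`. -/
lemma lex_append_of_lex_of_length_lt {u s : List α} (h : List.Lex (· < ·) u s)
    (hl : s.length < u.length) (x : List α) : List.Lex (· < ·) u (s ++ x) := by
  induction h with
  | nil => simp at hl
  | @cons a l1 l2 h ih => exact List.Lex.cons (ih (by simpa using hl))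
  | rel h => exact List.Lex.rel h

lemma lex_or_prefix_of_lex_append {m s p : List α} (h : List.Lex (· < ·) m (s ++ p)) :
    List.Lex (· < ·) m s ∨ s <+: m := by
  induction s generalizing m with
  | nil => exact Or.inr (nil_prefix)
  | cons b s ih =>
    cases m with
    | nil => exact Or.inl List.Lex.nil
    | cons a m =>
      rcases h with h | h
      · exact Or.inl (List.Lex.rel ‹_›)
      · rcases ih ‹_› with h' | h'
        · exact Or.inl (List.Lex.cons h')
        · exact Or.inr ((prefix_cons_inj _).2 h')

lemma prim_rotate {w : List α} (hw : Prim w) (r : ℕ) : Prim (w.rotate r) := by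
  intro s hs hs' h
  rw [length_rotate] at hs'
  apply hw s hs hs'
  have h2 : w.rotate (r + s) = w.rotate r := by rw [← rotate_rotate]; exact h
  have h3 : (w.rotate (r + s)).rotate (w.length * (r+1) - r) =
      (w.rotate r).rotate (w.length * (r+1) - r) := by rw [h2]
  rw [rotate_rotate, rotate_rotate] at h3
  have hlen : 1 ≤ w.length := by omega
  have hr : r ≤ w.length * (r + 1) := by nlinarith
  have e1 : r + s + (w.length * (r+1) - r) = w.length * (r+1) + s := by omega
  have e2 : r + (w.length * (r+1) - r) = w.length * (r+1) := by omega
  rw [e1, e2] at h3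
  rwa [← rotate_rotate, rotate_length_mul] at h3

lemma lyndon_lt_rotate {u : List α} (hu : IsLyndon u) {r : ℕ} (hr : 0 < r)
    (hr' : r < u.length) : List.Lex (· < ·) u (u.rotate r) := by
  rw [rotate_eq_drop_append_take hr'.le]
  exact lex_append_of_lex_of_length_lt (hu r hr hr')
    (by rw [length_drop]; omega) _

lemma lyndon_prim {u : List α} (hu : IsLyndon u) : Prim u := by
  intro r hr hr' h
  have h2 := lyndon_lt_rotate hu hr hr'
  rw [h] at h2
  exact lt_irrefl u h2

/-- the minimal rotation of a primitive word is Lyndon -/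
lemma min_rotation_lyndon {m : List α} (hm : Prim m)
    (hmin : ∀ s, 0 < s → s < m.length → List.Lex (· < ·) m (m.rotate s)) :
    IsLyndon m := by
  intro i hi hi'
  have hrot : m.rotate i = m.drop i ++ m.take i := rotate_eq_drop_append_take hi'.le
  have h1 : List.Lex (· < ·) m (m.drop i ++ m.take i) := hrot ▸ hmin i hi hi'
  rcases lex_or_prefix_of_lex_append h1 with h | h
  · exact h
  · exfalso
    obtain ⟨t, ht⟩ := h
    have hlt : t.length = i := by
      have := congrArg List.length ht
      simp [length_drop] at this
      omega
    have h2 : List.Lex (· < ·) t (m.take i) := by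
      apply lex_of_lex_append (s := m.drop i)
      rw [ht]; exact h1
    have h3 : List.Lex (· < ·) (t ++ m.drop i) m := by
      have := lex_append_right h2 (by rw [hlt, length_take]; omega) (m.drop i)
      rwa [take_append_drop] at this
    have h4 : m.rotate (m.length - i) = t ++ m.drop i := by
      rw [rotate_eq_drop_append_take (by omega)]
      congr 1
      · have h5 := congrArg (List.drop (m.length - i)) ht.symm
        rw [List.drop_append, length_drop, drop_drop] at h5
        rw [show i + (m.length - i) = m.length by omega, drop_length,
          show m.length - i - (m.length - i) = 0 by omega, drop_zero, nil_append] at h5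
        exact h5
      · have h5 := congrArg (List.take (m.length - i)) ht.symm
        have h6 : (m.drop i).take (m.length - i) = m.drop i :=
          take_of_length_le (by simp [length_drop])
        rw [List.take_append, length_drop,
          show m.length - i - (m.length - i) = 0 by omega, take_zero, append_nil, h6] at h5
        exact h5
    have h5 := hmin (m.length - i) (by omega) (by omega)
    rw [h4] at h5
    have h5' : m < t ++ m.drop i := h5
    have h3' : t ++ m.drop i < m := h3
    exact absurd h3' (lt_asymm h5')


section Per
variable {β : Type*}

lemma rotate_fix_mul {l : List β} {d : ℕ} (h : l.rotate d = l) (k : ℕ) :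
    l.rotate (k * d) = l := by
  induction k with
  | zero => simp
  | succ k ih => rw [Nat.succ_mul, ← rotate_rotate, ih, h]

lemma rotate_fix_sub {l : List β} {a b : ℕ} (ha : l.rotate a = l) (hb : l.rotate b = l)
    (hab : b ≤ a) : l.rotate (a - b) = l := by
  have : (l.rotate b).rotate (a - b) = l.rotate a := by
    rw [rotate_rotate]; congr 1; omega
  rw [hb, ha] at this; exact this

noncomputable def minPer (l : List β) : ℕ :=
  if h : 0 < l.length then
    Nat.find (⟨l.length, h, rotate_length l⟩ : ∃ r, 0 < r ∧ l.rotate r = l)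
  else 0

section
variable {l : List β} (hl : 0 < l.length)
include hl

lemma minPer_pos : 0 < minPer l := by
  rw [minPer, dif_pos hl]
  exact (Nat.find_spec (⟨l.length, hl, rotate_length l⟩ : ∃ r, 0 < r ∧ l.rotate r = l)).1

lemma rotate_minPer : l.rotate (minPer l) = l := by
  rw [minPer, dif_pos hl]
  exact (Nat.find_spec (⟨l.length, hl, rotate_length l⟩ : ∃ r, 0 < r ∧ l.rotate r = l)).2

lemma minPer_le_of_fix {r : ℕ} (hr : 0 < r) (h : l.rotate r = l) : minPer l ≤ r := by
  rw [minPer, dif_pos hl]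
  exact Nat.find_le ⟨hr, h⟩

lemma minPer_dvd_of_fix {r : ℕ} (h : l.rotate r = l) : minPer l ∣ r := by
  have hp := minPer_pos hl
  have hrot := rotate_minPer hl
  rcases Nat.eq_zero_or_pos (r % minPer l) with h0 | h0
  · exact Nat.dvd_of_mod_eq_zero h0
  · exfalso
    have hmul : l.rotate (r / minPer l * minPer l) = l := rotate_fix_mul hrot _
    have hsub : l.rotate (r - r / minPer l * minPer l) = l :=
      rotate_fix_sub h hmul (Nat.div_mul_le_self r _)
    have he : r - r / minPer l * minPer l = r % minPer l := by
      have := Nat.mod_add_div r (minPer l)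
      rw [Nat.mul_comm] at this
      omega
    rw [he] at hsub
    have h1 := minPer_le_of_fix hl h0 hsub
    have h2 := Nat.mod_lt r hp
    omega

lemma minPer_dvd_length : minPer l ∣ l.length :=
  minPer_dvd_of_fix hl (rotate_length l)

lemma minPer_le_length : minPer l ≤ l.length :=
  Nat.le_of_dvd hl (minPer_dvd_length hl)

end

section
variable {l : List β}

lemma gidx {l : List β} {i j : ℕ} (h : i = j) {hi : i < l.length} :
    l[i] = l[j]'(h ▸ hi) := by subst h; rfl

lemma rotate_fix_iff_getElem {r : ℕ} :
    l.rotate r = l ↔ ∀ k (h : k < l.length),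
      l[(k + r) % l.length]'(Nat.mod_lt _ (by omega)) = l[k] := by
  constructor
  · intro h k hk
    calc l[(k + r) % l.length]'(Nat.mod_lt _ (by omega))
        = (l.rotate r)[k]'(by simpa using hk) := (getElem_rotate l r k _).symm
      _ = l[k] := getElem_of_eq h _
  · intro h
    apply List.ext_getElem (by rw [length_rotate])
    intro k h1 h2
    rw [getElem_rotate]
    exact h k h2

/-- P5: if `rotate d` fixes `l`, then `l[i] = l[i % d]`. -/
lemma getElem_mod_of_fix {d : ℕ} (hd : 0 < d) (h : l.rotate d = l)
    (i : ℕ) (hi : i < l.length) :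
    l[i] = l[i % d]'(by have := Nat.mod_le i d; omega) := by
  induction i using Nat.strong_induction_on with
  | _ i ih =>
    by_cases hid : i < d
    · exact gidx (Nat.mod_eq_of_lt hid).symm
    · have h1 : i - d < i := by omega
      have h2 : l[i - d]'(by omega) = l[(i-d) % d]'(by have := Nat.mod_le (i-d) d; omega) :=
        ih (i - d) h1 (by omega)
      have h3 := (rotate_fix_iff_getElem.1 h) (i - d) (by omega)
      calc l[i] = l[(i - d + d) % l.length]'(Nat.mod_lt _ (by omega)) :=
              gidx (by rw [show i - d + d = i by omega, Nat.mod_eq_of_lt hi])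
        _ = l[i - d]'(by omega) := h3
        _ = l[(i-d) % d]'(by have := Nat.mod_le (i-d) d; omega) := h2
        _ = l[i % d]'(by have := Nat.mod_le i d; omega) := gidx (by
              conv_rhs => rw [show i = (i - d) + d by omega]
              rw [Nat.add_mod_right])

/-- P6: the prefix of length `minPer l` is primitive. -/
lemma prim_take_minPer (hl : 0 < l.length) : Prim (l.take (minPer l)) := by
  set p := minPer l with hp
  have hpp : 0 < p := minPer_pos hl
  have hple : p ≤ l.length := minPer_le_length hl
  have hpd : p ∣ l.length := minPer_dvd_length hl
  have hrot : l.rotate p = l := rotate_minPer hl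
  have hlen : (l.take p).length = p := by simp [length_take]; omega
  intro r hr hr' hfix
  rw [hlen] at hr'
  have hmod : ∀ (j : ℕ) (hj : j < l.length),
      l[j] = (l.take p)[j % p]'(by rw [hlen]; exact Nat.mod_lt _ hpp) := by
    intro j hj
    rw [getElem_take]
    exact getElem_mod_of_fix hpp hrot j hj
  have hfixl : l.rotate r = l := by
    rw [rotate_fix_iff_getElem]
    intro k hk
    have h4 := (rotate_fix_iff_getElem.1 hfix) (k % p) (by rw [hlen]; exact Nat.mod_lt _ hpp)
    calc l[(k + r) % l.length]'(Nat.mod_lt _ (by omega))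
        = (l.take p)[((k + r) % l.length) % p]'(by rw [hlen]; exact Nat.mod_lt _ hpp) :=
          hmod _ _
      _ = (l.take p)[(k % p + r) % (l.take p).length]'(by rw [hlen]; exact Nat.mod_lt _ (by omega)) :=
          gidx (by rw [Nat.mod_mod_of_dvd _ hpd, hlen]
                   exact ((Nat.mod_modEq k p).symm.add_right r))
      _ = (l.take p)[k % p]'(by rw [hlen]; exact Nat.mod_lt _ hpp) := h4
      _ = l[k] := (hmod _ hk).symm
  have := minPer_le_of_fix hl hr hfixl
  omega

/-- P7: uniqueness of the primitive period. -/
lemma minPer_unique {d : ℕ} (hl : 0 < l.length) (hd : 0 < d) (hdn : d ∣ l.length)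
    (hfix : l.rotate d = l) (hprim : Prim (l.take d)) : d = minPer l := by
  set p := minPer l with hp
  have hpp : 0 < p := minPer_pos hl
  have hple := minPer_le_of_fix hl hd hfix
  rcases eq_or_lt_of_le hple with h | h
  · exact h.symm
  · exfalso
    have hdl : d ≤ l.length := Nat.le_of_dvd hl hdn
    have hpd : p ∣ d := minPer_dvd_of_fix hl hfix
    have hrotp : l.rotate p = l := rotate_minPer hl
    have hlen : (l.take d).length = d := by simp [length_take]; omega
    apply hprim p hpp (by omega)
    rw [rotate_fix_iff_getElem]
    intro k hk
    rw [hlen] at hk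
    have hb1 : (k + p) % d < l.length := by have := Nat.mod_le (k+p) d; have := Nat.mod_lt (k+p) hd; omega
    calc (l.take d)[(k + p) % (l.take d).length]'(Nat.mod_lt _ (by omega))
        = l[(k + p) % d]'hb1 := by
          rw [getElem_take]; exact gidx (by rw [hlen])
      _ = l[(k + p) % d % p]'(by have := Nat.mod_le ((k+p) % d) p; omega) :=
          getElem_mod_of_fix hpp hrotp _ hb1
      _ = l[k % p]'(by have := Nat.mod_le k p; omega) :=
          gidx (by rw [Nat.mod_mod_of_dvd _ hpd, Nat.add_mod_right])
      _ = l[k]'(by omega) := (getElem_mod_of_fix hpp hrotp k (by omega)).symm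
      _ = (l.take d)[k]'(by rw [hlen]; omega) := getElem_take.symm
end

end Per

noncomputable def primWords (q n : ℕ) : Finset (Fin n → Fin q) :=
  Finset.univ.filter fun w => Prim (List.ofFn w)

lemma ofFn_shift {q n : ℕ} (u : Fin n → Fin q) (r : Fin n) :
    List.ofFn (fun j => u (j + r)) = (List.ofFn u).rotate r.val := by
  apply List.ext_getElem (by simp)
  intro k h1 h2
  rw [List.getElem_ofFn, List.getElem_rotate, List.getElem_ofFn]
  congr 1
  rw [Fin.add_def]
  simp at h1
  congr 1
  simp

lemma ofFn_restrict {q n d : ℕ} (hd : d ≤ n) (w : Fin n → Fin q) :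
    List.ofFn (fun j : Fin d => w ⟨j.val, lt_of_lt_of_le j.2 hd⟩) = (List.ofFn w).take d := by
  apply List.ext_getElem (by simp; omega)
  intro k h1 h2
  rw [List.getElem_ofFn, List.getElem_take, List.getElem_ofFn]

/-- Step B: the words of length `m` are partitioned according to their primitive root. -/
lemma sum_primWords (q m : ℕ) (hm : 0 < m) :
    ∑ d ∈ m.divisors, (primWords q d).card = q ^ m := by
  classical
  have hcard : (Finset.univ : Finset (Fin m → Fin q)).card = q ^ m := by
    simp [Fintype.card_fun]
  rw [← hcard]
  have hmem : ∀ w ∈ (Finset.univ : Finset (Fin m → Fin q)),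
      minPer (List.ofFn w) ∈ m.divisors := by
    intro w _
    rw [Nat.mem_divisors]
    refine ⟨?_, by omega⟩
    have := minPer_dvd_length (l := List.ofFn w) (by simp; omega)
    simpa using this
  rw [Finset.card_eq_sum_card_fiberwise hmem]
  apply Finset.sum_congr rfl
  intro d hd
  rw [Nat.mem_divisors] at hd
  obtain ⟨hdvd, hm0⟩ := hd
  have hd0 : 0 < d := Nat.pos_of_dvd_of_pos hdvd hm
  have hdm : d ≤ m := Nat.le_of_dvd hm hdvd
  symm
  apply Finset.card_bij (fun w _ => fun j : Fin d => w ⟨j.val, lt_of_lt_of_le j.2 hdm⟩)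
  · -- maps into primWords
    intro w hw
    simp only [primWords, Finset.mem_filter] at hw ⊢
    refine ⟨Finset.mem_univ _, ?_⟩
    rw [ofFn_restrict hdm]
    have hl : 0 < (List.ofFn w).length := by simp; omega
    have := prim_take_minPer hl
    rwa [hw.2] at this
  · -- injective
    intro w1 hw1 w2 hw2 heq
    simp only [Finset.mem_filter] at hw1 hw2
    have key : ∀ (w : Fin m → Fin q), minPer (List.ofFn w) = d →
        ∀ i : Fin m, w i = w ⟨i.val % d, by have := Nat.mod_lt i.val hd0; omega⟩ := by
      intro w hw i
      have hl : 0 < (List.ofFn w).length := by simp; omega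
      have hrot : (List.ofFn w).rotate d = List.ofFn w := by
        rw [← hw]; exact rotate_minPer hl
      have := getElem_mod_of_fix (l := List.ofFn w) hd0 hrot i.val (by simp)
      rw [List.getElem_ofFn, List.getElem_ofFn] at this
      convert this using 2
    funext i
    have e1 := key w1 hw1.2 i
    have e2 := key w2 hw2.2 i
    rw [e1, e2]
    have := congrFun heq ⟨i.val % d, Nat.mod_lt _ hd0⟩
    exact this
  · -- surjective
    intro v hv
    simp only [primWords, Finset.mem_filter] at hv
    set w : Fin m → Fin q := fun i => v ⟨i.val % d, Nat.mod_lt _ hd0⟩ with hwdef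
    have hl : 0 < (List.ofFn w).length := by simp; omega
    have hgw : ∀ (k : ℕ) (hk : k < m), (List.ofFn w)[k]'(by simpa using hk)
        = v ⟨k % d, Nat.mod_lt _ hd0⟩ := by
      intro k hk; rw [List.getElem_ofFn]
    have hfix : (List.ofFn w).rotate d = List.ofFn w := by
      rw [rotate_fix_iff_getElem]
      intro k hk
      simp only [List.length_ofFn] at hk ⊢
      rw [hgw _ (by have := Nat.mod_le (k+d) m; have := Nat.mod_lt (k+d) (by omega : 0 < m); omega),
        hgw _ hk]
      congr 2
      rw [Nat.mod_mod_of_dvd _ hdvd, Nat.add_mod_right]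
    have htake : (List.ofFn w).take d = List.ofFn v := by
      apply List.ext_getElem (by simp; omega)
      intro k h1 h2
      simp only [List.length_take, List.length_ofFn] at h1 h2
      rw [List.getElem_take, hgw _ (by omega), List.getElem_ofFn]
      congr 1
      exact Fin.ext (by simp [Nat.mod_eq_of_lt h2])
    have hmp : minPer (List.ofFn w) = d := by
      symm
      apply minPer_unique hl hd0 (by simpa using hdvd) hfix
      rw [htake]
      exact hv.2
    refine ⟨w, ?_, ?_⟩
    · simp only [Finset.mem_filter]

      exact ⟨Finset.mem_univ _, hmp⟩
    · funext j
      show w ⟨j.val, _⟩ = v j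
      rw [hwdef]
      exact congrArg v (Fin.ext (by simp [Nat.mod_eq_of_lt j.2]))

/-- Step C: primitive words of length `n` are counted by `n ·` Lyndon words. -/
lemma card_primWords (q n : ℕ) (hn : 0 < n) :
    (primWords q n).card = n * (lyndonWords q n).card := by
  classical
  have := Finset.card_bij
    (s := (lyndonWords q n) ×ˢ (Finset.univ : Finset (Fin n)))
    (t := primWords q n)
    (fun p _ => fun j : Fin n => p.1 (j + p.2))
    ?_ ?_ ?_
  · rw [Finset.card_product, Finset.card_univ, Fintype.card_fin] at this
    rw [← this, Nat.mul_comm]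
  · -- maps to
    rintro ⟨u, r⟩ hur
    simp only [lyndonWords, Finset.mem_product, Finset.mem_filter] at hur
    simp only [primWords, Finset.mem_filter]
    refine ⟨Finset.mem_univ _, ?_⟩
    rw [ofFn_shift]
    exact prim_rotate (lyndon_prim hur.1.2) _
  · -- injective
    rintro ⟨u, r⟩ hur ⟨u', r'⟩ hur' heq
    simp only [lyndonWords, Finset.mem_product, Finset.mem_filter] at hur hur'
    have hu := hur.1.2
    have hu' := hur'.1.2
    have hlen : (List.ofFn u).length = n := by simp
    have hlen' : (List.ofFn u').length = n := by simp
    have heql : (List.ofFn u).rotate r.val = (List.ofFn u').rotate r'.val := by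
      rw [← ofFn_shift, ← ofFn_shift]
      exact congrArg List.ofFn heq
    have hrr' : r'.val < n := r'.2
    have hrotmod : ∀ (L : List (Fin q)) (k : ℕ), L.length = n → L.rotate (k % n) = L.rotate k := by
      intro L k hL; rw [← hL]; exact List.rotate_mod _ _
    have hT' : List.ofFn u' = (List.ofFn u).rotate (r.val + (n - r'.val)) := by
      calc List.ofFn u' = (List.ofFn u').rotate (r'.val + (n - r'.val)) := by
            rw [show r'.val + (n - r'.val) = n by omega]
            have h0 := List.rotate_length (List.ofFn u')
            rw [hlen'] at h0
            exact h0.symm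
        _ = ((List.ofFn u').rotate r'.val).rotate (n - r'.val) := (List.rotate_rotate _ _ _).symm
        _ = ((List.ofFn u).rotate r.val).rotate (n - r'.val) := by rw [heql]
        _ = _ := List.rotate_rotate _ _ _
    have hT : List.ofFn u' = (List.ofFn u).rotate ((r.val + (n - r'.val)) % n) := by
      rw [hrotmod _ _ hlen]; exact hT'
    set t := (r.val + (n - r'.val)) % n with htdef
    have htn : t < n := Nat.mod_lt _ hn
    by_cases ht : t = 0
    · -- u = u' and r = r'
      rw [ht, List.rotate_zero] at hT
      have huu : u = u' := List.ofFn_injective hT.symm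
      have : n ∣ r.val + (n - r'.val) := Nat.dvd_of_mod_eq_zero ht
      have hrval : r.val = r'.val := by
        rcases this with ⟨c, hc⟩
        have h1 : r.val < n := r.2
        have hc1 : c = 1 := by
          by_contra hcc
          rcases Nat.lt_or_ge c 2 with h2 | h2
          · interval_cases c <;> omega
          · have := Nat.mul_le_mul_left n h2; omega
        subst hc1
        omega
      exact Prod.ext (by rw [huu]) (Fin.ext hrval)
    · exfalso
      have hlex1 : List.Lex (· < ·) (List.ofFn u) (List.ofFn u') := by
        rw [hT]
        exact lyndon_lt_rotate hu (by omega) (by omega)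
      have hback : (List.ofFn u').rotate (n - t) = List.ofFn u := by
        rw [hT, List.rotate_rotate, show t + (n - t) = n by omega]
        have h0 := List.rotate_length (List.ofFn u)
        rw [hlen] at h0
        exact h0
      have hlex2 : List.Lex (· < ·) (List.ofFn u') (List.ofFn u) := by
        rw [← hback]
        exact lyndon_lt_rotate hu' (by omega) (by omega)
      have l1 : List.ofFn u < List.ofFn u' := hlex1
      have l2 : List.ofFn u' < List.ofFn u := hlex2
      exact absurd l2 (lt_asymm l1)
  · -- surjective
    intro w hw
    simp only [primWords, Finset.mem_filter] at hw
    have hprim := hw.2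
    have hlen : (List.ofFn w).length = n := by simp
    obtain ⟨r0, hr0mem, hr0min⟩ := Finset.exists_min_image (Finset.range n)
      (fun r => (List.ofFn w).rotate r) ⟨0, Finset.mem_range.2 hn⟩
    rw [Finset.mem_range] at hr0mem
    set W := List.ofFn w with hW
    set m := W.rotate r0 with hm
    have hmlen : m.length = n := by simp [hm, hW]
    have hmprim : Prim m := prim_rotate hprim r0
    have hminall : ∀ s, 0 < s → s < m.length → List.Lex (· < ·) m (m.rotate s) := by
      intro s hs hs'
      have h1 : m.rotate s = W.rotate ((r0 + s) % n) := by
        rw [hm, List.rotate_rotate, ← hlen, List.rotate_mod]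
      have h2 : m ≤ m.rotate s := by
        rw [h1]
        exact hr0min _ (Finset.mem_range.2 (Nat.mod_lt _ hn))
      have h3 : m ≠ m.rotate s := by
        intro hcon
        exact hmprim s hs hs' hcon.symm
      exact lt_of_le_of_ne h2 h3
    have hlyn : IsLyndon m := min_rotation_lyndon hmprim hminall
    set u : Fin n → Fin q := fun j => w (j + ⟨r0, hr0mem⟩) with hu
    have hofu : List.ofFn u = m := by rw [hu, ofFn_shift]
    refine ⟨⟨u, ⟨(n - r0) % n, Nat.mod_lt _ hn⟩⟩, ?_, ?_⟩
    · simp only [lyndonWords, Finset.mem_product, Finset.mem_filter]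
      exact ⟨⟨Finset.mem_univ _, by rw [hofu]; exact hlyn⟩, Finset.mem_univ _⟩
    · apply List.ofFn_injective
      rw [ofFn_shift, hofu]
      show m.rotate ((n - r0) % n) = W
      rw [← hmlen, List.rotate_mod, hmlen, hm, List.rotate_rotate,
        show r0 + (n - r0) = n by omega, ← hlen, List.rotate_length]

end Aux

theorem stmt_5 (q n : ℕ) (hq : 1 ≤ q) (hn : 1 ≤ n) :
    ((lyndonWords q n).card : ℚ)
      = (1 / (n : ℚ)) *
          ∑ d ∈ n.divisors, ((ArithmeticFunction.moebius d : ℤ) : ℚ) * (q : ℚ) ^ (n / d) := by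
  have key : ∀ m : ℕ, m > 0 →
      ∑ d ∈ m.divisors, ((primWords q d).card : ℚ) = (q : ℚ) ^ m := by
    intro m hm
    have h0 := sum_primWords q m hm
    exact_mod_cast h0
  have inv := (ArithmeticFunction.sum_eq_iff_sum_mul_moebius_eq
    (R := ℚ) (f := fun d => ((primWords q d).card : ℚ)) (g := fun m => (q : ℚ) ^ m)).1 key
  have hinv := inv n (by omega)
  rw [Nat.sum_divisorsAntidiagonal (fun a b => ((ArithmeticFunction.moebius a : ℤ) : ℚ) * (q:ℚ) ^ b)] at hinv
  have hC := card_primWords q n (by omega)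
  have hcast : ((primWords q n).card : ℚ) = (n : ℚ) * ((lyndonWords q n).card : ℚ) := by
    rw [hC]; push_cast; ring
  rw [hcast] at hinv
  have hn0 : (n : ℚ) ≠ 0 := by positivity
  field_simp at hinv ⊢
  linarith [hinv]
end

section
/- Let q ≥ 2. There exists a constant C > 0 such that for every n ≥ 1 and every set A of Lyndon words of length n over an alphabet with q letters, |P̃_n(A) − P_n(ρ^{−1}(A))| ≤ C·q^{−n/2}, where P̃_n is the uniform probability on Lyndon words of length n, P_n is the uniform probability on all words of length n, and ρ^{−1}(A) is the set of primitive words whose associated Lyndon word lies in A. -/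
open scoped Classical

/-- A word is primitive if the only cyclic shift `τ^k w`, `0 ≤ k < n`, fixing it
is the trivial one, `k = 0`. -/
def IsPrimitive {α : Type*} (w : List α) : Prop :=
  ∀ k < w.length, w.rotate k = w → k = 0

/-- For a set `A` of words of length `n`, `rhoPreimage A` is the set of primitive
words `w` whose associated Lyndon word `ρ(w)` (the unique Lyndon word in the
cyclic-shift orbit of `w`) lies in `A`. -/
noncomputable def rhoPreimage {q n : ℕ} (A : Finset (Fin n → Fin q)) :
    Finset (Fin n → Fin q) :=
  Finset.univ.filter fun w => IsPrimitive (List.ofFn w) ∧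
    ∃ v ∈ A, ∃ k < n, (List.ofFn w).rotate k = List.ofFn v

open List

section LexLemmas

variable {α : Type*} {r : α → α → Prop}

/-- If `Lex r x (y ++ z)` and `y` is no longer than `x`, then either `Lex r x y`
or `y` is a prefix of `x`. -/
theorem lexC : ∀ {x y : List α} (z : List α), List.Lex r x (y ++ z) →
    y.length ≤ x.length → List.Lex r x y ∨ y <+: x := by
  intro x y
  induction y generalizing x with
  | nil => intro z h hl; exact Or.inr nil_prefix
  | cons b y' ih =>
    intro z h hl
    match x, h with
    | a :: x', List.Lex.rel hab => exact Or.inl (List.Lex.rel hab)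
    | b :: x', List.Lex.cons h' =>
      rcases ih z h' (by simpa using hl) with h2 | h2
      · exact Or.inl (List.Lex.cons h2)
      · exact Or.inr ((prefix_cons_inj b).mpr h2)

/-- If `Lex r t p` and `p` is no longer than `t`, then `Lex r (t++a) (p++b)`. -/
theorem lexD : ∀ {t p : List α} (a b : List α), List.Lex r t p →
    p.length ≤ t.length → List.Lex r (t ++ a) (p ++ b) := by
  intro t p
  induction p generalizing t with
  | nil => intro a b h hl; exact absurd h (fun h => by cases h)
  | cons c p' ih =>
    intro a b h hl
    match t, h with
    | d :: t', List.Lex.rel hab => exact List.Lex.rel hab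
    | c :: t', List.Lex.cons h' => exact List.Lex.cons (ih a b h' (by simpa using hl))

theorem lex_of_append_left [IsIrrefl α r] :
    ∀ (s : List α) {t p : List α}, List.Lex r (s ++ t) (s ++ p) → List.Lex r t p := by
  intro s
  induction s with
  | nil => intro t p h; exact h
  | cons a s ih =>
    intro t p h
    cases h with
    | cons h' => exact ih h'
    | rel hr => exact absurd hr (irrefl a)

theorem lex_asymm [LinearOrder α] {x y : List α}
    (h : List.Lex (· < ·) x y) (h2 : List.Lex (· < ·) y x) : False :=
  (List.Lex.asymm (· < ·)).asymm x y h h2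

end LexLemmas

section RotateLemmas

variable {α : Type*}

/-- A Lyndon word is (strictly) smaller than all its nontrivial rotations. -/
theorem lyndon_lt_rotate_s8 [LinearOrder α] {w : List α} (hw : IsLyndon w)
    {k : ℕ} (hk0 : 0 < k) (hk : k < w.length) :
    List.Lex (· < ·) w (w.rotate k) := by
  rw [rotate_eq_drop_append_take hk.le]
  exact List.Lex.append_right _ _ (hw k hk0 hk)

theorem IsLyndon.isPrimitive [LinearOrder α] {w : List α} (hw : IsLyndon w) :
    IsPrimitive w := by
  intro k hk hrot
  by_contra h
  have h1 := lyndon_lt_rotate_s8 hw (Nat.pos_of_ne_zero h) hk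
  rw [hrot] at h1
  exact lex_asymm h1 h1

theorem rotate_mul_self {w : List α} {g : ℕ} (h : w.rotate g = w) :
    ∀ m, w.rotate (g * m) = w := by
  intro m
  induction m with
  | zero => simp
  | succ m ih => rw [Nat.mul_succ, ← rotate_rotate, ih, h]

theorem rotate_mod_self {w : List α} {a g : ℕ} (hg : w.rotate g = w)
    (ha : w.rotate a = w) : w.rotate (a % g) = w := by
  rcases Nat.eq_zero_or_pos g with rfl | hgpos
  · simpa using ha
  · have h : a = g * (a / g) + a % g := (Nat.div_add_mod a g).symm
    rw [h, ← rotate_rotate, rotate_mul_self hg] at ha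
    exact ha

theorem rotate_gcd {w : List α} {a b : ℕ} (ha : w.rotate a = w) (hb : w.rotate b = w) :
    w.rotate (Nat.gcd a b) = w := by
  induction a, b using Nat.gcd.induction with
  | H0 b => simpa [Nat.gcd] using hb
  | H1 a b hpos ih =>
    rw [Nat.gcd_rec]
    exact ih (rotate_mod_self ha hb) ha

/-- Distinct rotations of a primitive word are distinct. -/
theorem IsPrimitive.rotate_inj {w : List α} (hw : IsPrimitive w) {j k : ℕ}
    (hj : j < w.length) (hk : k < w.length) (h : w.rotate j = w.rotate k) : j = k := by
  have aux : ∀ j k : ℕ, j < w.length → k < w.length → j ≤ k →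
      w.rotate j = w.rotate k → j = k := by
    intro j k hj hk hjk h
    have h2 : (w.rotate j).rotate (w.length - j) = (w.rotate k).rotate (w.length - j) := by
      rw [h]
    rw [rotate_rotate, rotate_rotate, Nat.add_sub_cancel' hj.le, rotate_length] at h2
    have h3 : k + (w.length - j) = w.length + (k - j) := by omega
    rw [h3, ← rotate_rotate, rotate_length] at h2
    have := hw (k - j) (by omega) h2.symm
    omega
  rcases le_total j k with hjk | hjk
  · exact aux j k hj hk hjk h
  · exact (aux k j hk hj hjk h.symm).symm

/-- Rotations of a primitive word are primitive. -/
theorem IsPrimitive.rotate {w : List α} (hw : IsPrimitive w) (j : ℕ) :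
    IsPrimitive (w.rotate j) := by
  intro k hk hrot
  rw [length_rotate] at hk
  have hlen : 0 < w.length := lt_of_le_of_lt (Nat.zero_le _) hk
  rw [rotate_rotate] at hrot
  have h1 : w.rotate ((j + k) % w.length) = w.rotate (j % w.length) := by
    rw [rotate_mod, rotate_mod, hrot]
  have h2 := hw.rotate_inj (Nat.mod_lt _ hlen) (Nat.mod_lt _ hlen) h1
  have h3 : (j + k) % w.length = (j + 0) % w.length := by simpa using h2
  have h4 : k % w.length = 0 % w.length :=
    Nat.ModEq.add_left_cancel' j h3
  rw [Nat.mod_eq_of_lt hk] at h4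
  simpa using h4

/-- Uniqueness of the Lyndon word in a rotation orbit. -/
theorem lyndon_rotate_unique [LinearOrder α] {v v' : List α} (hv : IsLyndon v)
    (hv' : IsLyndon v') {k : ℕ} (hk : k < v.length) (h : v.rotate k = v') : k = 0 := by
  by_contra h0
  have h1 : List.Lex (· < ·) v v' := h ▸ lyndon_lt_rotate_s8 hv (Nat.pos_of_ne_zero h0) hk
  have h2 : v'.rotate (v.length - k) = v := by
    rw [← h, rotate_rotate, Nat.add_sub_cancel' hk.le, rotate_length]
  have hlen : v'.length = v.length := by rw [← h, length_rotate]
  have h3 : List.Lex (· < ·) v' v :=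
    h2 ▸ lyndon_lt_rotate_s8 hv' (by omega) (by omega)
  exact lex_asymm h1 h3

/-- The minimal rotation of a primitive word is a Lyndon word. -/
theorem exists_lyndon_rotate [LinearOrder α] {w : List α} (hw : IsPrimitive w)
    (hlen : 0 < w.length) : ∃ k < w.length, IsLyndon (w.rotate k) := by
  classical
  obtain ⟨k, hkmem, hkmin⟩ := Finset.exists_min_image (Finset.range w.length)
    (fun j => w.rotate j) ⟨0, Finset.mem_range.mpr hlen⟩
  rw [Finset.mem_range] at hkmem
  refine ⟨k, hkmem, ?_⟩
  set v := w.rotate k with hv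
  have hvlen : v.length = w.length := length_rotate _ _
  have hvprim : IsPrimitive v := hw.rotate k
  have hminv : ∀ i, v ≤ v.rotate i := by
    intro i
    rw [rotate_rotate, ← rotate_mod]
    exact hkmin _ (Finset.mem_range.mpr (Nat.mod_lt _ hlen))
  have hlt : ∀ i, 0 < i → i < v.length → List.Lex (· < ·) v (v.rotate i) := by
    intro i hi0 hi
    have hne : v ≠ v.rotate i := by
      intro he
      exact absurd (hvprim i hi he.symm) (by omega)
    exact lt_of_le_of_ne (hminv i) hne
  intro i hi0 hi
  have hvsplit : v.take i ++ v.drop i = v := take_append_drop i v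
  have hrot : v.rotate i = v.drop i ++ v.take i := rotate_eq_drop_append_take hi.le
  have h1 : List.Lex (· < ·) v (v.drop i ++ v.take i) := hrot ▸ hlt i hi0 hi
  rcases lexC (v.take i) h1 (by rw [length_drop]; omega) with h2 | h2
  · exact h2
  · -- border case: drop i v is a prefix of v, derive a contradiction
    exfalso
    obtain ⟨t, ht⟩ := h2
    set s := v.drop i with hs
    have hslen : s.length = v.length - i := length_drop
    have htlen : t.length = i := by
      have := congrArg List.length ht
      simp only [length_append] at this
      omega
    have htakelen : (v.take i).length = i := by
      rw [length_take]; omega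
    have h3 : List.Lex (· < ·) (s ++ t) (s ++ v.take i) := by rw [ht]; exact h1
    have h4 : List.Lex (· < ·) t (v.take i) := lex_of_append_left s h3
    have h5 : List.Lex (· < ·) (t ++ s) (v.take i ++ s) :=
      lexD _ _ h4 (by omega)
    rw [hvsplit] at h5
    have h6 : v.rotate s.length = t ++ s := by
      conv_lhs => rw [← ht]
      rw [rotate_eq_drop_append_take (by simp), drop_left, take_left]
    have h7 : List.Lex (· < ·) v (t ++ s) := by
      rw [← h6]
      exact hlt s.length (by omega) (by omega)
    exact lex_asymm h5 h7

end RotateLemmas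

section Counting

theorem rotate_back {α : Type*} {n : ℕ} {l : List α} (hl : l.length = n) {k : ℕ}
    (hk : k < n) : (l.rotate k).rotate ((n - k) % n) = l := by
  rcases Nat.eq_zero_or_pos k with rfl | hk0
  · simp [Nat.mod_self]
  · rw [Nat.mod_eq_of_lt (by omega), rotate_rotate, Nat.add_sub_cancel' hk.le, ← hl,
      rotate_length]

theorem exists_ofFn_eq {q n : ℕ} (l : List (Fin q)) (hl : l.length = n) :
    ∃ v : Fin n → Fin q, List.ofFn v = l := by
  subst hl
  exact ⟨l.get, List.ofFn_get l⟩

/-- Function version of rotation. -/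
noncomputable def rotF {q n : ℕ} (hn : 0 < n) (k : ℕ) (w : Fin n → Fin q) : Fin n → Fin q :=
  fun i => w ⟨((i : ℕ) + k) % n, Nat.mod_lt _ hn⟩

theorem ofFn_rotF {q n : ℕ} (hn : 0 < n) (k : ℕ) (w : Fin n → Fin q) :
    List.ofFn (rotF hn k w) = (List.ofFn w).rotate k := by
  apply List.ext_get
  · simp
  · intro i h1 h2
    rw [List.get_ofFn, List.get_rotate, List.get_ofFn]
    simp [rotF]

theorem mem_lyndonWords {q n : ℕ} {w : Fin n → Fin q} :
    w ∈ lyndonWords q n ↔ IsLyndon (List.ofFn w) := by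
  simp [lyndonWords]

theorem mem_rhoPreimage {q n : ℕ} {A : Finset (Fin n → Fin q)} {w : Fin n → Fin q} :
    w ∈ rhoPreimage A ↔ IsPrimitive (List.ofFn w) ∧
      ∃ v ∈ A, ∃ k < n, (List.ofFn w).rotate k = List.ofFn v := by
  simp [rhoPreimage]

theorem card_rhoPreimage {q n : ℕ} (hn : 0 < n) (A : Finset (Fin n → Fin q))
    (hA : A ⊆ lyndonWords q n) : (rhoPreimage A).card = n * A.card := by
  have key : (A ×ˢ Finset.range n).card = (rhoPreimage A).card := by
    apply Finset.card_bij (fun p _ => rotF hn p.2 p.1)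
    · rintro ⟨v, k⟩ hp
      rw [Finset.mem_product, Finset.mem_range] at hp
      obtain ⟨hv, hk⟩ := hp
      have hvl : IsLyndon (List.ofFn v) := mem_lyndonWords.mp (hA hv)
      rw [mem_rhoPreimage, ofFn_rotF]
      refine ⟨hvl.isPrimitive.rotate k, v, hv, (n - k) % n,
        Nat.mod_lt _ hn, rotate_back (by simp) hk⟩
    · rintro ⟨v, k⟩ hp ⟨v', k'⟩ hp' heq
      rw [Finset.mem_product, Finset.mem_range] at hp hp'
      obtain ⟨hv, hk⟩ := hp
      obtain ⟨hv', hk'⟩ := hp'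
      have hvl : IsLyndon (List.ofFn v) := mem_lyndonWords.mp (hA hv)
      have hvl' : IsLyndon (List.ofFn v') := mem_lyndonWords.mp (hA hv')
      have heql : (List.ofFn v).rotate k = (List.ofFn v').rotate k' := by
        rw [← ofFn_rotF hn, ← ofFn_rotF hn, heq]
      have h2 : (List.ofFn v).rotate (k + (n - k') % n) = List.ofFn v' := by
        rw [← rotate_rotate, heql, rotate_back (by simp) hk']
      have h3 : (List.ofFn v).rotate ((k + (n - k') % n) % n) = List.ofFn v' := by
        have hmod := List.rotate_mod (List.ofFn v) (k + (n - k') % n)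
        rw [length_ofFn] at hmod
        rw [hmod, h2]
      have h4 := lyndon_rotate_unique hvl hvl'
        (k := (k + (n - k') % n) % n) (by rw [length_ofFn]; exact Nat.mod_lt _ hn) h3
      rw [h4, rotate_zero] at h3
      have hveq : v = v' := List.ofFn_injective h3
      subst hveq
      have hkk : k = k' := hvl.isPrimitive.rotate_inj (by simp [hk]) (by simp [hk']) heql
      simp [hkk]
    · intro w hw
      rw [mem_rhoPreimage] at hw
      obtain ⟨hprim, v, hv, k, hk, hrot⟩ := hw
      refine ⟨(v, (n - k) % n), ?_, ?_⟩
      · rw [Finset.mem_product, Finset.mem_range]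
        exact ⟨hv, Nat.mod_lt _ hn⟩
      · apply List.ofFn_injective
        rw [ofFn_rotF, ← hrot, rotate_back (by simp) hk]
  rw [← key, Finset.card_product, Finset.card_range, Nat.mul_comm]

theorem card_primitive {q n : ℕ} (hn : 0 < n) :
    (Finset.univ.filter fun w : Fin n → Fin q => IsPrimitive (List.ofFn w)).card
      = n * (lyndonWords q n).card := by
  rw [← card_rhoPreimage hn (lyndonWords q n) (le_refl _)]
  congr 1
  apply Finset.ext
  intro w
  rw [mem_rhoPreimage, Finset.mem_filter]
  constructor
  · rintro ⟨-, hp⟩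
    obtain ⟨k, hk, hlyn⟩ := exists_lyndon_rotate hp (by simp [hn])
    rw [length_ofFn] at hk
    obtain ⟨v, hv⟩ := exists_ofFn_eq (n := n) ((List.ofFn w).rotate k) (by simp)
    exact ⟨hp, v, mem_lyndonWords.mpr (hv ▸ hlyn), k, hk, hv.symm⟩
  · rintro ⟨hp, -⟩
    exact ⟨Finset.mem_univ _, hp⟩

/-- A word fixed by rotation by `g` is determined by its first `g` letters. -/
theorem periodic_mod {α : Type*} {l : List α} {g : ℕ} (hg : 0 < g)
    (hfix : l.rotate g = l) : ∀ i, i < l.length → l[i]? = l[i % g]? := by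
  have key : ∀ j, j < l.length → l[j]? = l[(j + g) % l.length]? := by
    intro j hj
    conv_lhs => rw [← hfix]
    rw [List.getElem?_rotate hj]
  intro i
  induction i using Nat.strong_induction_on with
  | _ i ih =>
    intro h
    rcases Nat.lt_or_ge i g with hig | hig
    · rw [Nat.mod_eq_of_lt hig]
    · have hsub : i - g < l.length := by omega
      have h1 : l[i - g]? = l[i]? := by
        rw [key (i - g) hsub, Nat.sub_add_cancel hig, Nat.mod_eq_of_lt h]
      rw [← h1, ih (i - g) (by omega) hsub, Nat.mod_eq_sub_mod hig]

theorem card_periodic_le {q n g : ℕ} (hg : 0 < g) (hgn : g ≤ n) :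
    (Finset.univ.filter fun w : Fin n → Fin q =>
      (List.ofFn w).rotate g = List.ofFn w).card ≤ q ^ g := by
  have hcard : (Finset.univ : Finset (Fin g → Fin q)).card = q ^ g := by
    simp
  rw [← hcard]
  apply Finset.card_le_card_of_injOn
    (fun w => fun i : Fin g => w ⟨(i : ℕ), lt_of_lt_of_le i.2 hgn⟩)
  · intro w _; exact Finset.mem_univ _
  · intro w hw w' hw' heq
    simp only [Finset.mem_coe, Finset.mem_filter] at hw hw'
    funext i
    have hmod : (i : ℕ) % g < g := Nat.mod_lt _ hg
    have e1 : (List.ofFn w)[(i : ℕ)]? = (List.ofFn w)[(i : ℕ) % g]? :=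
      periodic_mod hg hw.2 _ (by simp)
    have e2 : (List.ofFn w')[(i : ℕ)]? = (List.ofFn w')[(i : ℕ) % g]? :=
      periodic_mod hg hw'.2 _ (by simp)
    have g1 : ∀ (v : Fin n → Fin q) (j : ℕ) (hj : j < n),
        (List.ofFn v)[j]? = some (v ⟨j, hj⟩) := by
      intro v j hj
      simp [hj]
    have hmodn : (i : ℕ) % g < n := lt_of_lt_of_le hmod hgn
    rw [g1 w _ i.2, g1 w _ hmodn] at e1
    rw [g1 w' _ i.2, g1 w' _ hmodn] at e2
    have hcoord : w ⟨(i : ℕ) % g, hmodn⟩ = w' ⟨(i : ℕ) % g, hmodn⟩ := by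
      have := congrFun heq ⟨(i : ℕ) % g, hmod⟩
      simpa using this
    rw [Option.some.inj e1, hcoord, ← Option.some.inj e2]

/-- Count of non-primitive words. -/
theorem card_nonprimitive_le {q n : ℕ} (hn : 0 < n) :
    (Finset.univ.filter fun w : Fin n → Fin q =>
      ¬ IsPrimitive (List.ofFn w)).card ≤ ∑ g ∈ Finset.Icc 1 (n / 2), q ^ g := by
  have hsub : (Finset.univ.filter fun w : Fin n → Fin q => ¬ IsPrimitive (List.ofFn w))
      ⊆ (Finset.Icc 1 (n / 2)).biUnion (fun g => Finset.univ.filter fun w : Fin n → Fin q =>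
        (List.ofFn w).rotate g = List.ofFn w) := by
    intro w hw
    rw [Finset.mem_filter] at hw
    obtain ⟨-, hw⟩ := hw
    rw [IsPrimitive] at hw
    push_neg at hw
    obtain ⟨k, hk, hrot, hk0⟩ := hw
    rw [length_ofFn] at hk
    set g := Nat.gcd k n with hgdef
    have hrotg : (List.ofFn w).rotate g = List.ofFn w := by
      apply rotate_gcd hrot
      have h := rotate_length (List.ofFn w)
      rwa [length_ofFn] at h
    have hg0 : 0 < g := Nat.gcd_pos_of_pos_left _ (Nat.pos_of_ne_zero hk0)
    have hgdvd : g ∣ n := Nat.gcd_dvd_right _ _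
    have hgn : g < n :=
      lt_of_le_of_lt (Nat.le_of_dvd (Nat.pos_of_ne_zero hk0) (Nat.gcd_dvd_left _ _)) hk
    have hghalf : g ≤ n / 2 := by
      obtain ⟨m, hm⟩ := hgdvd
      have hm2 : 2 ≤ m := by
        rcases Nat.lt_or_ge m 2 with h | h
        · interval_cases m <;> omega
        · exact h
      rw [Nat.le_div_iff_mul_le (by norm_num)]
      calc g * 2 ≤ g * m := Nat.mul_le_mul_left _ hm2
      _ = n := hm.symm
    rw [Finset.mem_biUnion]
    exact ⟨g, Finset.mem_Icc.mpr ⟨hg0, hghalf⟩,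
      Finset.mem_filter.mpr ⟨Finset.mem_univ _, hrotg⟩⟩
  calc _ ≤ _ := Finset.card_le_card hsub
  _ ≤ ∑ g ∈ Finset.Icc 1 (n / 2), q ^ g := by
    apply le_trans (Finset.card_biUnion_le)
    apply Finset.sum_le_sum
    intro g hg
    rw [Finset.mem_Icc] at hg
    exact card_periodic_le hg.1 (le_trans hg.2 (Nat.div_le_self _ _))

/-- Geometric sum bound. -/
theorem geom_sum_le {q : ℕ} (hq : 2 ≤ q) (m : ℕ) :
    ∑ g ∈ Finset.Icc 1 m, q ^ g ≤ 2 * q ^ m := by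
  induction m with
  | zero => simp
  | succ m ih =>
    rw [Finset.sum_Icc_succ_top (by omega)]
    calc ∑ g ∈ Finset.Icc 1 m, q ^ g + q ^ (m + 1) ≤ 2 * q ^ m + q ^ (m + 1) := by omega
    _ ≤ 2 * q ^ (m + 1) := by
        have h1 : 2 * q ^ m ≤ q ^ (m + 1) := by
          rw [pow_succ, mul_comm (q ^ m) q]
          exact Nat.mul_le_mul_right _ hq
        omega

end Counting

theorem stmt_8 (q : ℕ) (hq : 2 ≤ q) :
    ∃ C : ℝ, 0 < C ∧ ∀ n : ℕ, 1 ≤ n →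
      ∀ A : Finset (Fin n → Fin q), A ⊆ lyndonWords q n →
        |(A.card : ℝ) / ((lyndonWords q n).card : ℝ)
            - ((rhoPreimage A).card : ℝ) / (q : ℝ) ^ n|
          ≤ C * (q : ℝ) ^ (-(n : ℝ) / 2) := by
  refine ⟨2, by norm_num, ?_⟩
  intro n hn A hA
  have hn0 : 0 < n := hn
  have hq0 : (0 : ℝ) < q := by positivity
  have hq1 : (1 : ℝ) ≤ q := by exact_mod_cast (by omega : 1 ≤ q)
  have hqpow : (0 : ℝ) < (q : ℝ) ^ n := by positivity
  have hrpos : (0 : ℝ) < (q : ℝ) ^ (-(n : ℝ) / 2) := Real.rpow_pos_of_pos hq0 _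
  -- the key counting identities
  have hcardA : ((rhoPreimage A).card : ℕ) = n * A.card := card_rhoPreimage hn0 A hA
  -- partition of all words into primitive and non-primitive
  set N : ℕ := (Finset.univ.filter fun w : Fin n → Fin q =>
    ¬ IsPrimitive (List.ofFn w)).card with hNdef
  have hpart : n * (lyndonWords q n).card + N = q ^ n := by
    have h1 := Finset.card_filter_add_card_filter_not
      (s := (Finset.univ : Finset (Fin n → Fin q)))
      (p := fun w => IsPrimitive (List.ofFn w))
    have h2 : (Finset.univ : Finset (Fin n → Fin q)).card = q ^ n := by
      simp [Finset.card_univ]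
    rw [card_primitive hn0] at h1
    rw [← h2]
    convert h1 using 3
  have hNbound : N ≤ 2 * q ^ (n / 2) :=
    le_trans (card_nonprimitive_le hn0) (geom_sum_le hq _)
  -- real versions
  set L : ℕ := (lyndonWords q n).card with hLdef
  have hAcard : A.card ≤ L := Finset.card_le_card hA
  rcases Nat.eq_zero_or_pos L with hL0 | hLpos
  · -- degenerate case: no Lyndon words
    have hA0 : A.card = 0 := by omega
    have hrho0 : (rhoPreimage A).card = 0 := by rw [hcardA, hA0, Nat.mul_zero]
    rw [hA0, hrho0]
    simp only [Nat.cast_zero, zero_div, sub_zero, abs_zero]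
    positivity
  · have hLposR : (0 : ℝ) < L := by exact_mod_cast hLpos
    have hkey : ((q : ℝ) ^ n) = n * L + N := by
      exact_mod_cast hpart.symm
    -- the expression is nonnegative and equal to a * N / (L * q^n)
    have hval : (A.card : ℝ) / L - ((rhoPreimage A).card : ℝ) / (q : ℝ) ^ n
        = (A.card : ℝ) * N / (L * (q : ℝ) ^ n) := by
      rw [hcardA]
      push_cast
      field_simp
      rw [hkey]
      ring
    rw [hval]
    have habs : |(A.card : ℝ) * N / (L * (q : ℝ) ^ n)|
        = (A.card : ℝ) * N / (L * (q : ℝ) ^ n) := by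
      apply abs_of_nonneg
      positivity
    rw [habs]
    -- bound by N / q^n
    have hb1 : (A.card : ℝ) * N / (L * (q : ℝ) ^ n) ≤ (N : ℝ) / (q : ℝ) ^ n := by
      rw [div_le_div_iff₀ (by positivity) (by positivity)]
      have : (A.card : ℝ) ≤ L := by exact_mod_cast hAcard
      calc (A.card : ℝ) * N * (q : ℝ) ^ n ≤ (L : ℝ) * N * (q : ℝ) ^ n := by
            apply mul_le_mul_of_nonneg_right _ (le_of_lt hqpow)
            exact mul_le_mul_of_nonneg_right this (by positivity)
      _ = (N : ℝ) * ((L : ℝ) * (q : ℝ) ^ n) := by ring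
    apply le_trans hb1
    -- bound N / q^n ≤ 2 q^{-n/2}
    have hN2 : (N : ℝ) ≤ 2 * (q : ℝ) ^ ((n / 2 : ℕ) : ℝ) := by
      rw [Real.rpow_natCast]
      exact_mod_cast hNbound
    have hexp : (q : ℝ) ^ ((n / 2 : ℕ) : ℝ) ≤ (q : ℝ) ^ ((n : ℝ) / 2) := by
      apply Real.rpow_le_rpow_of_exponent_le hq1
      exact_mod_cast Nat.cast_div_le
    have hfinal : ((N : ℝ)) / (q : ℝ) ^ n ≤ 2 * (q : ℝ) ^ ((n : ℝ) / 2) / (q : ℝ) ^ n := by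
      gcongr
      exact le_trans hN2 (by nlinarith [hexp])
    apply le_trans hfinal
    have : 2 * (q : ℝ) ^ ((n : ℝ) / 2) / (q : ℝ) ^ n = 2 * (q : ℝ) ^ (-(n : ℝ) / 2) := by
      rw [mul_div_assoc]
      congr 1
      rw [← Real.rpow_natCast (q : ℝ) n, ← Real.rpow_sub hq0]
      congr 1
      ring
    rw [this]
end

section
/- Consider the alphabet {a, b} with a < b, and for each n let P̃_n be the uniform probability on the set of Lyndon words of length n, and N_n the number of runs. For every γ > 0 there exists a constant C_γ > 0 such that for every ε > 0, P̃_n(|N_n − n/2| ≥ γ·n^{1/2+ε}) = O(exp(−C_γ·n^{2ε})) as n → ∞; that is, there exist K > 0 and n_0 such that for all n ≥ n_0, P̃_n(|N_n − n/2| ≥ γ·n^{1/2+ε}) ≤ K·exp(−C_γ·n^{2ε}). -/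
open scoped Classical

/-- The number of runs (maximal blocks of consecutive equal letters) of a word. -/
def numRuns {α : Type*} [DecidableEq α] (l : List α) : ℕ :=
  (l.destutter (· ≠ ·)).length

namespace Stmt10Aux

open Finset

/-! ### Runs and adjacent changes -/

lemma fin2_eq_of_ne {a b c : Fin 2} (h1 : a ≠ b) (h2 : a ≠ c) : b = c := by omega

lemma numRuns_cons_cons {α : Type*} [DecidableEq α] (a b : α) (l : List α) :
    numRuns (a :: b :: l) = (if a = b then 0 else 1) + numRuns (b :: l) := by
  by_cases h : a = b
  · subst h; simp [numRuns, List.destutter_cons_cons, List.destutter_cons']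
  · simp [numRuns, List.destutter_cons_cons, h, List.destutter_cons']
    omega

lemma numRuns_ofFn_succ : ∀ (n : ℕ) (w : Fin (n+1) → Fin 2),
    numRuns (List.ofFn w) = 1 + ∑ i : Fin n, (if w i.castSucc = w i.succ then 0 else 1)
  | 0, w => by simp [numRuns, List.ofFn_succ]
  | (n+1), w => by
      have h1 : List.ofFn w = w 0 :: w 1 :: List.ofFn (fun i : Fin n => w i.succ.succ) := by
        rw [List.ofFn_succ]
        congr 1
        rw [List.ofFn_succ]
        rfl
      rw [h1, numRuns_cons_cons]
      have h2 : (w 1 :: List.ofFn (fun i : Fin n => w i.succ.succ)) =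
          List.ofFn (fun i : Fin (n+1) => w i.succ) := by
        rw [List.ofFn_succ]; rfl
      rw [h2, numRuns_ofFn_succ n (fun i : Fin (n+1) => w i.succ)]
      rw [Fin.sum_univ_succ]
      simp only [Fin.castSucc_zero, Fin.succ_zero_eq_one, Fin.succ_castSucc]
      grind

/-! ### Counting words by number of changes -/

lemma word_ext {n : ℕ} (w w' : Fin (n+1) → Fin 2) (h0 : w 0 = w' 0)
    (h : ∀ i : Fin n, (w i.castSucc = w i.succ) ↔ (w' i.castSucc = w' i.succ)) : w = w' := by
  funext j
  obtain ⟨m, hm⟩ := j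
  induction m with
  | zero => exact h0
  | succ m ih =>
    have hm' : m < n := by omega
    have key := h ⟨m, hm'⟩
    have hcs : (⟨m, hm'⟩ : Fin n).castSucc = ⟨m, by omega⟩ := rfl
    have hsu : (⟨m, hm'⟩ : Fin n).succ = ⟨m+1, hm⟩ := rfl
    rw [hcs, hsu] at key
    have ihm := ih (by omega)
    by_cases hc : w ⟨m, by omega⟩ = w ⟨m+1, hm⟩
    · rw [← hc, ihm, (key.mp hc)]
    · have hc' : ¬ (w' ⟨m, by omega⟩ = w' ⟨m+1, hm⟩) := fun hh => hc (key.mpr hh)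
      rw [ihm] at hc
      exact fin2_eq_of_ne hc hc'

lemma card_filter_le (n : ℕ) (Q : ℕ → Prop) [DecidablePred Q] :
    ((univ.filter fun w : Fin (n+1) → Fin 2 =>
        Q (1 + ∑ i : Fin n, (if w i.castSucc = w i.succ then 0 else 1))).card : ℕ)
      ≤ 2 * ∑ c ∈ (range (n+1)).filter (fun c => Q (1 + c)), n.choose c := by
  classical
  set S := univ.filter fun w : Fin (n+1) → Fin 2 =>
        Q (1 + ∑ i : Fin n, (if w i.castSucc = w i.succ then 0 else 1)) with hS
  set B := ((range (n+1)).filter (fun c => Q (1 + c))).biUnion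
      (fun c => Finset.powersetCard c (univ : Finset (Fin n))) with hB
  set T := (univ : Finset (Fin 2)) ×ˢ B with hT
  have hsum : ∀ w : Fin (n+1) → Fin 2,
      (∑ i : Fin n, (if w i.castSucc = w i.succ then 0 else 1))
        = (univ.filter fun i : Fin n => ¬ (w i.castSucc = w i.succ)).card := by
    intro w
    rw [Finset.card_filter]
    congr 1; funext i
    by_cases h : w i.castSucc = w i.succ <;> simp [h]
  have hmaps : ∀ w ∈ S, (w 0, univ.filter fun i : Fin n => ¬ (w i.castSucc = w i.succ)) ∈ T := by
    intro w hw
    simp only [hS, mem_filter, mem_univ, true_and] at hw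
    simp only [hT, mem_product, mem_univ, true_and, hB, mem_biUnion]
    refine ⟨(univ.filter fun i : Fin n => ¬ (w i.castSucc = w i.succ)).card, ?_, ?_⟩
    · simp only [mem_filter, mem_range]
      constructor
      · have := Finset.card_filter_le (univ : Finset (Fin n))
          (fun i : Fin n => ¬ (w i.castSucc = w i.succ))
        simp only [Finset.card_univ, Fintype.card_fin] at this
        omega
      · rw [← hsum w]; exact hw
    · simp [Finset.mem_powersetCard_univ]
  have hinj : Set.InjOn (fun w : Fin (n+1) → Fin 2 =>
      (w 0, univ.filter fun i : Fin n => ¬ (w i.castSucc = w i.succ))) S := by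
    intro w hw w' hw' heq
    simp only [Prod.mk.injEq] at heq
    refine word_ext w w' heq.1 (fun i => ?_)
    have := Finset.ext_iff.mp heq.2 i
    simp only [mem_filter, mem_univ, true_and] at this
    tauto
  have hcard := Finset.card_le_card_of_injOn _ hmaps hinj
  refine hcard.trans ?_
  rw [hT, Finset.card_product]
  simp only [Finset.card_univ, Fintype.card_fin]
  have : B.card ≤ ∑ c ∈ (range (n+1)).filter (fun c => Q (1 + c)), n.choose c := by
    refine (Finset.card_biUnion_le).trans ?_
    refine Finset.sum_le_sum (fun c _ => ?_)
    rw [Finset.card_powersetCard]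
    simp
  omega

lemma badAll_le (n : ℕ) (hn : 2 ≤ n) (Q : ℕ → Prop) [DecidablePred Q] :
    (univ.filter fun w : Fin n → Fin 2 => Q (numRuns (List.ofFn w))).card
      ≤ 2 * ∑ c ∈ (range n).filter (fun c => Q (1 + c)), (n-1).choose c := by
  obtain ⟨m, rfl⟩ : ∃ m, n = m + 1 := ⟨n-1, by omega⟩
  have heq : (univ.filter fun w : Fin (m+1) → Fin 2 => Q (numRuns (List.ofFn w)))
      = (univ.filter fun w : Fin (m+1) → Fin 2 =>
          Q (1 + ∑ i : Fin m, (if w i.castSucc = w i.succ then 0 else 1))) := by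
    apply Finset.filter_congr
    intro w _
    rw [numRuns_ofFn_succ]
  rw [heq]
  simpa using card_filter_le m Q

end Stmt10Aux

/-! ### Chernoff-type binomial tail bounds -/

namespace Stmt10Aux

open Finset Real

lemma sum_choose_mul_pow (m : ℕ) (x : ℝ) :
    ∑ c ∈ range (m+1), (m.choose c : ℝ) * x ^ c = (1 + x) ^ m := by
  rw [add_comm (1:ℝ) x, add_pow]
  refine Finset.sum_congr rfl (fun c _ => ?_)
  ring

lemma one_add_exp_le (l : ℝ) : 1 + Real.exp l ≤ 2 * Real.exp (l/2 + l^2/8) := by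
  have h : 1 + Real.exp l = Real.exp (l/2) * (2 * Real.cosh (l/2)) := by
    rw [Real.cosh_eq]
    have e1 : Real.exp (l/2) * Real.exp (l/2) = Real.exp l := by
      rw [← Real.exp_add]; ring_nf
    have e2 : Real.exp (l/2) * Real.exp (-(l/2)) = 1 := by
      rw [← Real.exp_add]; simp
    linear_combination -e1 - e2
  rw [h]
  have hc : Real.cosh (l/2) ≤ Real.exp ((l/2)^2/2) := Real.cosh_le_exp_half_sq _
  have he : (l/2)^2/2 = l^2/8 := by ring
  rw [he] at hc
  calc Real.exp (l/2) * (2 * Real.cosh (l/2)) ≤ Real.exp (l/2) * (2 * Real.exp (l^2/8)) := by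
        have := Real.exp_pos (l/2)
        nlinarith [Real.cosh_pos (l/2)]
    _ = 2 * Real.exp (l/2 + l^2/8) := by rw [Real.exp_add]; ring

lemma binom_tail_upper (m : ℕ) (hm : 0 < m) (s : ℝ) (hs : 0 ≤ s) :
    ∑ c ∈ (range (m+1)).filter (fun c : ℕ => (m:ℝ)/2 + s ≤ (c:ℝ)), ((m.choose c : ℕ) : ℝ)
      ≤ 2 ^ m * Real.exp (-2 * s^2 / m) := by
  set l : ℝ := 4 * s / m with hl
  have hl0 : 0 ≤ l := by positivity
  have step1 : ∑ c ∈ (range (m+1)).filter (fun c : ℕ => (m:ℝ)/2 + s ≤ (c:ℝ)), ((m.choose c : ℕ) : ℝ)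
      ≤ ∑ c ∈ range (m+1), (m.choose c : ℝ) * Real.exp (l * ((c:ℝ) - (m:ℝ)/2 - s)) := by
    refine le_trans (Finset.sum_le_sum ?_) (Finset.sum_le_sum_of_subset_of_nonneg
      (Finset.filter_subset _ _) (fun c _ _ => by positivity))
    intro c hc
    simp only [mem_filter, mem_range] at hc
    have h1 : (1:ℝ) ≤ Real.exp (l * ((c:ℝ) - (m:ℝ)/2 - s)) := by
      rw [← Real.exp_zero]
      apply Real.exp_le_exp.mpr
      have : (0:ℝ) ≤ (c:ℝ) - (m:ℝ)/2 - s := by linarith [hc.2]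
      positivity
    nlinarith [h1, (Nat.cast_nonneg (m.choose c) : (0:ℝ) ≤ (m.choose c : ℝ))]
  have step3 : ∑ c ∈ range (m+1), (m.choose c : ℝ) * Real.exp (l * ((c:ℝ) - (m:ℝ)/2 - s))
      = Real.exp (- l * ((m:ℝ)/2 + s)) * (1 + Real.exp l) ^ m := by
    rw [← sum_choose_mul_pow m (Real.exp l), Finset.mul_sum]
    refine Finset.sum_congr rfl (fun c _ => ?_)
    rw [show l * ((c:ℝ) - (m:ℝ)/2 - s) = (c:ℕ) * l + (-l*((m:ℝ)/2+s)) by push_cast; ring,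
      Real.exp_add, Real.exp_nat_mul]
    ring
  have step4 : (1 + Real.exp l) ^ m ≤ (2 * Real.exp (l/2 + l^2/8)) ^ m := by
    apply pow_le_pow_left₀ (by positivity) (one_add_exp_le l)
  have step5 : Real.exp (- l * ((m:ℝ)/2 + s)) * (2 * Real.exp (l/2 + l^2/8)) ^ m
      = 2^m * Real.exp (- l * s + (m:ℝ) * l^2 / 8) := by
    rw [mul_pow, ← Real.exp_nat_mul, mul_left_comm, ← Real.exp_add]
    congr 1
    ring
  have hexp : - l * s + (m:ℝ) * l^2 / 8 = -2 * s^2 / m := by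
    have hm' : (m:ℝ) ≠ 0 := Nat.cast_ne_zero.mpr hm.ne'
    field_simp [hl]
    rw [hl]; field_simp; ring
  calc ∑ c ∈ (range (m+1)).filter (fun c : ℕ => (m:ℝ)/2 + s ≤ (c:ℝ)), ((m.choose c : ℕ) : ℝ)
      ≤ Real.exp (- l * ((m:ℝ)/2 + s)) * (1 + Real.exp l) ^ m := step1.trans_eq step3
    _ ≤ Real.exp (- l * ((m:ℝ)/2 + s)) * (2 * Real.exp (l/2 + l^2/8)) ^ m := by
        apply mul_le_mul_of_nonneg_left step4 (Real.exp_pos _).le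
    _ = 2^m * Real.exp (-2 * s^2 / m) := by rw [step5, hexp]

lemma binom_tail_lower (m : ℕ) (hm : 0 < m) (s : ℝ) (hs : 0 ≤ s) :
    ∑ c ∈ (range (m+1)).filter (fun c : ℕ => (c:ℝ) ≤ (m:ℝ)/2 - s), ((m.choose c : ℕ) : ℝ)
      ≤ 2 ^ m * Real.exp (-2 * s^2 / m) := by
  set l : ℝ := 4 * s / m with hl
  have hl0 : 0 ≤ l := by positivity
  have step1 : ∑ c ∈ (range (m+1)).filter (fun c : ℕ => (c:ℝ) ≤ (m:ℝ)/2 - s), ((m.choose c : ℕ) : ℝ)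
      ≤ ∑ c ∈ range (m+1), (m.choose c : ℝ) * Real.exp (l * ((m:ℝ)/2 - s - (c:ℝ))) := by
    refine le_trans (Finset.sum_le_sum ?_) (Finset.sum_le_sum_of_subset_of_nonneg
      (Finset.filter_subset _ _) (fun c _ _ => by positivity))
    intro c hc
    simp only [mem_filter, mem_range] at hc
    have h1 : (1:ℝ) ≤ Real.exp (l * ((m:ℝ)/2 - s - (c:ℝ))) := by
      rw [← Real.exp_zero]
      apply Real.exp_le_exp.mpr
      have : (0:ℝ) ≤ (m:ℝ)/2 - s - (c:ℝ) := by linarith [hc.2]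
      positivity
    nlinarith [h1, (Nat.cast_nonneg (m.choose c) : (0:ℝ) ≤ (m.choose c : ℝ))]
  have step3 : ∑ c ∈ range (m+1), (m.choose c : ℝ) * Real.exp (l * ((m:ℝ)/2 - s - (c:ℝ)))
      = Real.exp (l * ((m:ℝ)/2 - s)) * (1 + Real.exp (-l)) ^ m := by
    rw [← sum_choose_mul_pow m (Real.exp (-l)), Finset.mul_sum]
    refine Finset.sum_congr rfl (fun c _ => ?_)
    rw [show l * ((m:ℝ)/2 - s - (c:ℝ)) = (c:ℕ) * (-l) + l * ((m:ℝ)/2 - s) by push_cast; ring,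
      Real.exp_add, Real.exp_nat_mul]
    ring
  have step4 : (1 + Real.exp (-l)) ^ m ≤ (2 * Real.exp (-l/2 + l^2/8)) ^ m := by
    apply pow_le_pow_left₀ (by positivity)
    have := one_add_exp_le (-l)
    calc 1 + Real.exp (-l) ≤ 2 * Real.exp ((-l)/2 + (-l)^2/8) := this
      _ = 2 * Real.exp (-l/2 + l^2/8) := by ring_nf
  have step5 : Real.exp (l * ((m:ℝ)/2 - s)) * (2 * Real.exp (-l/2 + l^2/8)) ^ m
      = 2^m * Real.exp (- l * s + (m:ℝ) * l^2 / 8) := by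
    rw [mul_pow, ← Real.exp_nat_mul, mul_left_comm, ← Real.exp_add]
    congr 1
    ring
  have hexp : - l * s + (m:ℝ) * l^2 / 8 = -2 * s^2 / m := by
    have hm' : (m:ℝ) ≠ 0 := Nat.cast_ne_zero.mpr hm.ne'
    field_simp [hl]
    rw [hl]; field_simp; ring
  calc ∑ c ∈ (range (m+1)).filter (fun c : ℕ => (c:ℝ) ≤ (m:ℝ)/2 - s), ((m.choose c : ℕ) : ℝ)
      ≤ Real.exp (l * ((m:ℝ)/2 - s)) * (1 + Real.exp (-l)) ^ m := step1.trans_eq step3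
    _ ≤ Real.exp (l * ((m:ℝ)/2 - s)) * (2 * Real.exp (-l/2 + l^2/8)) ^ m := by
        apply mul_le_mul_of_nonneg_left step4 (Real.exp_pos _).le
    _ = 2^m * Real.exp (-2 * s^2 / m) := by rw [step5, hexp]

lemma binom_tail_abs (m : ℕ) (hm : 0 < m) (s : ℝ) (hs : 0 < s) :
    ∑ c ∈ (range (m+1)).filter (fun c : ℕ => s ≤ |(c:ℝ) - (m:ℝ)/2|), ((m.choose c : ℕ) : ℝ)
      ≤ 2 * 2 ^ m * Real.exp (-2 * s^2 / m) := by
  have hsub : (range (m+1)).filter (fun c : ℕ => s ≤ |(c:ℝ) - (m:ℝ)/2|)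
      ⊆ (range (m+1)).filter (fun c : ℕ => (m:ℝ)/2 + s ≤ (c:ℝ))
        ∪ (range (m+1)).filter (fun c : ℕ => (c:ℝ) ≤ (m:ℝ)/2 - s) := by
    intro c hc
    simp only [mem_filter, mem_range, mem_union] at hc ⊢
    rcases abs_cases ((c:ℝ) - (m:ℝ)/2) with h | h
    · left; exact ⟨hc.1, by linarith [hc.2, h.1]⟩
    · right; exact ⟨hc.1, by linarith [hc.2, h.1]⟩
  have hdisj : Disjoint ((range (m+1)).filter (fun c : ℕ => (m:ℝ)/2 + s ≤ (c:ℝ)))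
      ((range (m+1)).filter (fun c : ℕ => (c:ℝ) ≤ (m:ℝ)/2 - s)) := by
    rw [Finset.disjoint_left]
    intro c hc1 hc2
    simp only [mem_filter, mem_range] at hc1 hc2
    linarith [hc1.2, hc2.2]
  calc ∑ c ∈ (range (m+1)).filter (fun c : ℕ => s ≤ |(c:ℝ) - (m:ℝ)/2|), ((m.choose c : ℕ) : ℝ)
      ≤ ∑ c ∈ ((range (m+1)).filter (fun c : ℕ => (m:ℝ)/2 + s ≤ (c:ℝ))
          ∪ (range (m+1)).filter (fun c : ℕ => (c:ℝ) ≤ (m:ℝ)/2 - s)), ((m.choose c : ℕ) : ℝ) :=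
        Finset.sum_le_sum_of_subset_of_nonneg hsub (fun c _ _ => by positivity)
    _ = _ + _ := Finset.sum_union hdisj
    _ ≤ 2^m * Real.exp (-2 * s^2 / m) + 2^m * Real.exp (-2 * s^2 / m) :=
        add_le_add (binom_tail_upper m hm s hs.le) (binom_tail_lower m hm s hs.le)
    _ = 2 * 2^m * Real.exp (-2 * s^2 / m) := by ring

end Stmt10Aux

/-! ### Lower bound on the number of Lyndon words -/

namespace Stmt10Aux

open Finset

lemma lex_of_getElem {α : Type*} [LinearOrder α] :
    ∀ (d : ℕ) (l₁ l₂ : List α) (h₁ : d < l₁.length) (h₂ : d < l₂.length),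
      (∀ t (ht : t < d), l₁[t]'(by omega) = l₂[t]'(by omega)) →
      l₁[d] < l₂[d] → List.Lex (· < ·) l₁ l₂
  | 0, a :: _, b :: _, _, _, _, hlt => List.Lex.rel hlt
  | (d+1), a :: l₁, b :: l₂, h₁, h₂, hagree, hlt => by
      have h0 : a = b := hagree 0 (Nat.succ_pos d)
      subst h0
      exact List.Lex.cons (lex_of_getElem d l₁ l₂ (by simpa using h₁) (by simpa using h₂)
        (fun t ht => hagree (t+1) (by omega)) hlt)

lemma card_filter_fixed_eq (n : ℕ) (S : Finset (Fin n)) (f : Fin n → Fin 2) :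
    (univ.filter fun w : Fin n → Fin 2 => ∀ i ∈ S, w i = f i).card = 2 ^ (n - S.card) := by
  classical
  have h := Finset.card_bij'
    (i := fun (w : Fin n → Fin 2) (_ : w ∈ univ.filter fun w : Fin n → Fin 2 => ∀ i ∈ S, w i = f i)
       => (fun i : ↥(Sᶜ : Finset (Fin n)) => w i.1 : ↥(Sᶜ : Finset (Fin n)) → Fin 2))
    (j := fun (g : ↥(Sᶜ : Finset (Fin n)) → Fin 2)
        (_ : g ∈ (univ : Finset (↥(Sᶜ : Finset (Fin n)) → Fin 2)))
       => fun i : Fin n => if h : i ∈ S then f i else g ⟨i, by simp [h]⟩)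
    (hi := fun w hw => Finset.mem_univ _)
    (hj := fun g hg => by
      simp only [mem_filter, mem_univ, true_and]
      intro i hi
      simp [hi])
    (left_inv := fun w hw => by
      simp only [mem_filter, mem_univ, true_and] at hw
      funext i
      by_cases h : i ∈ S
      · simp [h, hw i h]
      · simp [h])
    (right_inv := fun g hg => by
      funext i
      obtain ⟨i, hi⟩ := i
      have : i ∉ S := by simpa using hi
      simp [this])
  rw [h]
  simp [Finset.card_compl]

lemma isLyndon_of_struct (n k : ℕ) (hk1 : 1 ≤ k) (hkn : k + 2 ≤ n)
    (w : Fin n → Fin 2)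
    (F1 : ∀ i : Fin n, (i : ℕ) < k → w i = 0)
    (F2 : w ⟨k, by omega⟩ = 1)
    (F5 : ∀ i : ℕ, k + 1 ≤ i → i < n → ∃ j : Fin n, i ≤ (j:ℕ) ∧ (j:ℕ) < i + k ∧ w j = 1) :
    IsLyndon (List.ofFn w) := by
  intro i hi0 hin
  rw [List.length_ofFn] at hin
  have key : ∃ d : ℕ, ∃ hdn : d < n, ∃ hidn : i + d < n,
      (∀ t (ht : t < d), w ⟨t, by omega⟩ = 0 ∧ w ⟨i + t, by omega⟩ = 0) ∧
      w ⟨d, hdn⟩ = 0 ∧ w ⟨i + d, hidn⟩ = 1 := by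
    by_cases hik : i ≤ k
    · refine ⟨k - i, by omega, by omega, ?_, ?_, ?_⟩
      · intro t ht
        exact ⟨F1 _ (by simp; omega), F1 _ (by simp; omega)⟩
      · exact F1 _ (by simp; omega)
      · have hiv : i + (k - i) = k := by omega
        have : (⟨i + (k - i), by omega⟩ : Fin n) = ⟨k, by omega⟩ := by
          apply Fin.ext; simp [hiv]
        rw [this]; exact F2
    · push_neg at hik
      have hex : ∃ t : ℕ, t < k ∧ ∃ j : Fin n, (j : ℕ) = i + t ∧ w j = 1 := by
        obtain ⟨j, hj1, hj2, hj3⟩ := F5 i (by omega) hin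
        exact ⟨(j : ℕ) - i, by omega, j, by omega, hj3⟩
      set d := Nat.find hex with hd
      obtain ⟨hdk, j, hjval, hj1⟩ := Nat.find_spec hex
      have hjn : i + d < n := by have := j.2; omega
      refine ⟨d, by omega, hjn, ?_, ?_, ?_⟩
      · intro t ht
        have hnt := Nat.find_min hex ht
        refine ⟨F1 _ (by simp; omega), ?_⟩
        by_contra hne
        have hw1 : w ⟨i + t, by omega⟩ = 1 := by omega
        exact hnt ⟨by omega, ⟨i + t, by omega⟩, rfl, hw1⟩
      · exact F1 _ (by simp; omega)
      · have : (⟨i + d, hjn⟩ : Fin n) = j := by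
          apply Fin.ext; simp [hjval, hd]
        rw [this]; exact hj1
  obtain ⟨d, hdn, hidn, hagree, hd0, hd1⟩ := key
  have hlen1 : d < (List.ofFn w).length := by simpa using hdn
  have hlen2 : d < ((List.ofFn w).drop i).length := by
    simp only [List.length_drop, List.length_ofFn]; omega
  refine lex_of_getElem d _ _ hlen1 hlen2 ?_ ?_
  · intro t ht
    obtain ⟨h2, h3⟩ := hagree t ht
    rw [List.getElem_drop, List.getElem_ofFn, List.getElem_ofFn]
    exact h2.trans h3.symm
  · rw [List.getElem_drop, List.getElem_ofFn, List.getElem_ofFn]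
    have : w ⟨d, hdn⟩ < w ⟨i + d, hidn⟩ := by rw [hd0, hd1]; decide
    exact this

lemma lyndon_card_lower (n k : ℕ) (hk1 : 1 ≤ k) (hkn : 2*k + 2 ≤ n) (hn2k : n ≤ 2^(k-1)) :
    2 ^ (n - (k+3)) ≤ (lyndonWords 2 n).card := by
  classical
  have hS₀m : ∀ m ∈ (range (k+1)) ∪ {n-1}, m < n := by
    intro m hm
    simp only [mem_union, mem_range, mem_singleton] at hm
    omega
  set S : Finset (Fin n) := ((range (k+1)) ∪ {n-1}).attachFin hS₀m with hSdef
  have hmemS : ∀ i : Fin n, i ∈ S ↔ ((i:ℕ) < k + 1 ∨ (i:ℕ) = n - 1) := by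
    intro i
    simp [hSdef, Finset.mem_attachFin]
    tauto
  have hScard : S.card = k + 2 := by
    rw [hSdef, Finset.card_attachFin, Finset.card_union_of_disjoint, Finset.card_range,
      Finset.card_singleton]
    simp only [Finset.disjoint_singleton_right, mem_range]
    omega
  set f : Fin n → Fin 2 := fun i => if (i:ℕ) < k then 0 else 1 with hfdef
  set A := univ.filter (fun w : Fin n → Fin 2 => ∀ i ∈ S, w i = f i) with hAdef
  have hAcard : A.card = 2 ^ (n - (k+2)) := by
    rw [hAdef, card_filter_fixed_eq, hScard]
  set I := Finset.Icc (k+1) (n-1-k) with hIdef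
  set G := A.filter (fun w => ∀ i ∈ I, ∃ j : Fin n, i ≤ (j:ℕ) ∧ (j:ℕ) < i + k ∧ w j = 1)
    with hGdef
  set Bad : ℕ → Finset (Fin n → Fin 2) := fun i => univ.filter
    (fun w : Fin n → Fin 2 => (∀ i' ∈ S, w i' = f i') ∧
      ∀ j : Fin n, i ≤ (j:ℕ) → (j:ℕ) < i + k → w j = 0) with hBaddef
  have hcover : A ⊆ G ∪ I.biUnion Bad := by
    intro w hw
    by_cases hg : ∀ i ∈ I, ∃ j : Fin n, i ≤ (j:ℕ) ∧ (j:ℕ) < i + k ∧ w j = 1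
    · exact Finset.mem_union_left _ (Finset.mem_filter.mpr ⟨hw, hg⟩)
    · push_neg at hg
      obtain ⟨i, hiI, hi⟩ := hg
      refine Finset.mem_union_right _ (Finset.mem_biUnion.mpr ⟨i, hiI, ?_⟩)
      simp only [hBaddef, mem_filter, mem_univ, true_and]
      refine ⟨(Finset.mem_filter.mp hw).2, fun j hj1 hj2 => ?_⟩
      have := hi j hj1 hj2
      omega
  have hbad : ∀ i ∈ I, (Bad i).card ≤ 2 ^ (n - (2*k+2)) := by
    intro i hiI
    simp only [hIdef, Finset.mem_Icc] at hiI
    have hwin : i + k ≤ n - 1 := by omega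
    have hS₀m' : ∀ m ∈ ((range (k+1)) ∪ {n-1}) ∪ Finset.Ico i (i+k), m < n := by
      intro m hm
      simp only [mem_union, mem_range, mem_singleton, Finset.mem_Ico] at hm
      omega
    set S' : Finset (Fin n) := (((range (k+1)) ∪ {n-1}) ∪ Finset.Ico i (i+k)).attachFin hS₀m'
      with hS'def
    set f' : Fin n → Fin 2 := fun j =>
      if (j:ℕ) < k then 0 else if i ≤ (j:ℕ) ∧ (j:ℕ) < i + k then 0 else 1 with hf'def
    have hsub : Bad i ⊆ univ.filter (fun w : Fin n → Fin 2 => ∀ i' ∈ S', w i' = f' i') := by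
      intro w hw
      simp only [hBaddef, mem_filter, mem_univ, true_and] at hw
      obtain ⟨hw1, hw2⟩ := hw
      simp only [mem_filter, mem_univ, true_and]
      intro i' hi'
      rw [hS'def, Finset.mem_attachFin] at hi'
      simp only [mem_union, mem_range, mem_singleton, Finset.mem_Ico] at hi'
      rcases hi' with (h | h) | h
      · have := hw1 i' ((hmemS i').mpr (Or.inl h))
        rw [this, hfdef, hf'def]
        simp only []
        by_cases hik : (i':ℕ) < k
        · simp [hik]
        · have h1 : ¬ (i ≤ (i':ℕ) ∧ (i':ℕ) < i + k) := by omega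
          simp [hik, h1]
      · have := hw1 i' ((hmemS i').mpr (Or.inr h))
        rw [this, hfdef, hf'def]
        have h0 : ¬ ((i':ℕ) < k) := by omega
        have h1 : ¬ (i ≤ (i':ℕ) ∧ (i':ℕ) < i + k) := by omega
        simp [h0, h1]
      · have := hw2 i' h.1 h.2
        rw [this, hf'def]
        have h0 : ¬ ((i':ℕ) < k) := by omega
        simp [h0, h]
    have hS'card : S'.card = 2*k + 2 := by
      rw [hS'def, Finset.card_attachFin, Finset.card_union_of_disjoint,
        Finset.card_union_of_disjoint, Finset.card_range, Finset.card_singleton,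
        Nat.card_Ico]
      · omega
      · simp only [Finset.disjoint_singleton_right, mem_range]; omega
      · rw [Finset.disjoint_left]
        intro m hm hm2
        simp only [mem_union, mem_range, mem_singleton] at hm
        simp only [Finset.mem_Ico] at hm2
        omega
    calc (Bad i).card ≤ _ := Finset.card_le_card hsub
      _ = 2 ^ (n - S'.card) := card_filter_fixed_eq n S' f'
      _ = 2 ^ (n - (2*k+2)) := by rw [hS'card]
  have hGL : G ⊆ lyndonWords 2 n := by
    intro w hw
    simp only [hGdef, hAdef, mem_filter, mem_univ, true_and] at hw
    obtain ⟨hw1, hw2⟩ := hw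
    have F1 : ∀ i : Fin n, (i : ℕ) < k → w i = 0 := by
      intro i hi
      have := hw1 i ((hmemS i).mpr (Or.inl (by omega)))
      rw [this, hfdef]; simp [hi]
    have F2 : w ⟨k, by omega⟩ = 1 := by
      have := hw1 ⟨k, by omega⟩ ((hmemS _).mpr (Or.inl (by simp)))
      rw [this, hfdef]; simp
    have F3 : w ⟨n-1, by omega⟩ = 1 := by
      have := hw1 ⟨n-1, by omega⟩ ((hmemS _).mpr (Or.inr (by simp)))
      rw [this, hfdef]
      have : ¬ ((n-1 : ℕ) < k) := by omega
      simp [this]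
    have F5 : ∀ i : ℕ, k + 1 ≤ i → i < n → ∃ j : Fin n, i ≤ (j:ℕ) ∧ (j:ℕ) < i + k ∧ w j = 1 := by
      intro i hi1 hi2
      by_cases hc : i ≤ n - 1 - k
      · exact hw2 i (Finset.mem_Icc.mpr ⟨hi1, hc⟩)
      · exact ⟨⟨n-1, by omega⟩, by simp; omega, by simp; omega, F3⟩
    rw [lyndonWords]
    exact Finset.mem_filter.mpr ⟨Finset.mem_univ _,
      isLyndon_of_struct n k hk1 (by omega) w F1 F2 F5⟩
  have hIcard : I.card ≤ n := by
    rw [hIdef, Nat.card_Icc]; omega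
  have hbiUnion : (I.biUnion Bad).card ≤ n * 2 ^ (n - (2*k+2)) := by
    calc (I.biUnion Bad).card ≤ ∑ i ∈ I, (Bad i).card := Finset.card_biUnion_le
      _ ≤ ∑ _i ∈ I, 2 ^ (n - (2*k+2)) := Finset.sum_le_sum hbad
      _ = I.card * 2 ^ (n - (2*k+2)) := by rw [Finset.sum_const, smul_eq_mul]
      _ ≤ n * 2 ^ (n - (2*k+2)) := Nat.mul_le_mul_right _ hIcard
  have hA_le : A.card ≤ G.card + n * 2 ^ (n - (2*k+2)) := by
    calc A.card ≤ (G ∪ I.biUnion Bad).card := Finset.card_le_card hcover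
      _ ≤ G.card + (I.biUnion Bad).card := Finset.card_union_le _ _
      _ ≤ G.card + n * 2 ^ (n - (2*k+2)) := by omega
  have hn2 : n * 2 ^ (n - (2*k+2)) ≤ 2 ^ (n - (k+3)) := by
    calc n * 2 ^ (n - (2*k+2)) ≤ 2^(k-1) * 2 ^ (n - (2*k+2)) := Nat.mul_le_mul_right _ hn2k
      _ = 2 ^ (n - (k+3)) := by rw [← pow_add]; congr 1; omega
  have hApow : A.card = 2 ^ (n - (k+3)) + 2 ^ (n - (k+3)) := by
    rw [hAcard, show n - (k+2) = (n - (k+3)) + 1 by omega, pow_succ]; ring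
  have hGcard : 2 ^ (n - (k+3)) ≤ G.card := by omega
  exact hGcard.trans (Finset.card_le_card hGL)

lemma aux_two_pow : ∀ l : ℕ, 5 ≤ l → 2*l + 6 ≤ 2^l := by
  intro l hl
  induction l with
  | zero => omega
  | succ l ih =>
    rcases Nat.lt_or_ge l 5 with h | h
    · interval_cases l <;> simp_all <;> omega
    · have := ih h
      have h2 : (2:ℕ)^(l+1) = 2^l * 2 := pow_succ 2 l
      have h3 : (2:ℕ) ≤ 2^l := by
        calc (2:ℕ) = 2^1 := (pow_one 2).symm
        _ ≤ 2^l := Nat.pow_le_pow_right (by norm_num) (by omega)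
      omega

end Stmt10Aux

set_option maxHeartbeats 1000000 in
theorem stmt_10 (γ : ℝ) (hγ : 0 < γ) :
    ∃ C : ℝ, 0 < C ∧ ∀ ε : ℝ, 0 < ε →
      ∃ K : ℝ, 0 < K ∧ ∃ n₀ : ℕ, ∀ n : ℕ, n₀ ≤ n →
        (((lyndonWords 2 n).filter fun w =>
            γ * (n : ℝ) ^ ((1 : ℝ) / 2 + ε)
              ≤ |(numRuns (List.ofFn w) : ℝ) - n / 2|).card : ℝ)
          / ((lyndonWords 2 n).card : ℝ)
        ≤ K * Real.exp (-C * (n : ℝ) ^ (2 * ε)) := by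
  classical
  refine ⟨γ^2/4, by positivity, ?_⟩
  intro ε hε
  refine ⟨64, by norm_num, ?_⟩
  have h2e : (0:ℝ) < 2*ε := by linarith
  have hlog : ∀ᶠ x : ℝ in Filter.atTop, ‖Real.log x‖ ≤ γ^2/4 * ‖x ^ (2*ε)‖ :=
    (isLittleO_log_rpow_atTop h2e).bound (by positivity)
  have hlogN : ∀ᶠ n : ℕ in Filter.atTop, ‖Real.log (n:ℝ)‖ ≤ γ^2/4 * ‖((n:ℝ)) ^ (2*ε)‖ :=
    tendsto_natCast_atTop_atTop.eventually hlog
  have htN : ∀ᶠ n : ℕ in Filter.atTop, 1 ≤ γ * (n:ℝ) ^ ((1:ℝ)/2 + ε) := by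
    have h1 : Filter.Tendsto (fun n : ℕ => γ * (n:ℝ) ^ ((1:ℝ)/2 + ε))
        Filter.atTop Filter.atTop := by
      apply Filter.Tendsto.const_mul_atTop hγ
      exact (tendsto_rpow_atTop (by linarith)).comp tendsto_natCast_atTop_atTop
    exact h1.eventually_ge_atTop 1
  have hall : ∀ᶠ n : ℕ in Filter.atTop, (64 ≤ n ∧
      ‖Real.log (n:ℝ)‖ ≤ γ^2/4 * ‖((n:ℝ)) ^ (2*ε)‖ ∧ 1 ≤ γ * (n:ℝ) ^ ((1:ℝ)/2 + ε)) := by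
    filter_upwards [Filter.eventually_ge_atTop 64, hlogN, htN] with n a b c
    exact ⟨a, b, c⟩
  obtain ⟨n₀, hn₀⟩ := Filter.eventually_atTop.mp hall
  refine ⟨n₀, fun n hn => ?_⟩
  obtain ⟨h64, hlogn', htn⟩ := hn₀ n hn
  have hn0 : (0:ℝ) < (n:ℝ) := by exact_mod_cast Nat.pos_of_ne_zero (by omega)
  have hn1 : (1:ℝ) ≤ (n:ℝ) := by exact_mod_cast (by omega : 1 ≤ n)
  have hXnn : (0:ℝ) ≤ (n:ℝ) ^ (2*ε) := Real.rpow_nonneg hn0.le _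
  have hlogn : Real.log (n:ℝ) ≤ γ^2/4 * (n:ℝ)^(2*ε) := by
    rw [Real.norm_eq_abs, Real.norm_eq_abs, abs_of_nonneg (Real.log_nonneg hn1),
      abs_of_nonneg hXnn] at hlogn'
    exact hlogn'
  -- Lyndon word count lower bound
  set k := Nat.log2 n + 2 with hk
  have hl6 : 6 ≤ Nat.log2 n := (Nat.le_log2 (by omega)).mpr (by norm_num; omega)
  have h2l : 2^(Nat.log2 n) ≤ n := (Nat.le_log2 (by omega)).mp le_rfl
  have hkn : 2*k + 2 ≤ n := by
    have hp := Stmt10Aux.aux_two_pow (Nat.log2 n) (by omega)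
    omega
  have hn2k : n ≤ 2^(k-1) := by
    have hkk : k - 1 = Nat.log2 n + 1 := by omega
    rw [hkk]
    exact Nat.lt_log2_self.le
  have hL := Stmt10Aux.lyndon_card_lower n k (by omega) hkn hn2k
  have hLpos : 0 < (lyndonWords 2 n).card := lt_of_lt_of_le (Nat.pow_pos (by norm_num)) hL
  have hLposr : (0:ℝ) < ((lyndonWords 2 n).card : ℝ) := by exact_mod_cast hLpos
  have hLr : (2:ℝ)^n / (32 * (n:ℝ)) ≤ ((lyndonWords 2 n).card : ℝ) := by
    have h1 : ((2^(n-(k+3)) : ℕ) : ℝ) ≤ ((lyndonWords 2 n).card : ℝ) := Nat.cast_le.mpr hL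
    have h2 : ((2^(n-(k+3)) : ℕ) : ℝ) = (2:ℝ)^(n-(k+3)) := by push_cast; ring
    have h3 : (2:ℝ)^(n-(k+3)) * (2:ℝ)^(k+3) = (2:ℝ)^n := by
      rw [← pow_add]; congr 1; omega
    have h4 : (2:ℝ)^(k+3) ≤ 32 * (n:ℝ) := by
      have h5 : ((2:ℝ))^(Nat.log2 n) ≤ (n:ℝ) := by exact_mod_cast h2l
      have h6 : (2:ℝ)^(k+3) = 32 * (2:ℝ)^(Nat.log2 n) := by
        rw [hk, show Nat.log2 n + 2 + 3 = Nat.log2 n + 5 by omega, pow_add]; ring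
      rw [h6]; linarith
    have h6 : (2:ℝ)^n / (32*(n:ℝ)) ≤ (2:ℝ)^(n-(k+3)) := by
      rw [div_le_iff₀ (by positivity)]
      calc (2:ℝ)^n = (2:ℝ)^(n-(k+3)) * (2:ℝ)^(k+3) := h3.symm
        _ ≤ (2:ℝ)^(n-(k+3)) * (32*(n:ℝ)) :=
            mul_le_mul_of_nonneg_left h4 (by positivity)
    rw [h2] at h1
    linarith
  -- numerator upper bound
  obtain ⟨m, rfl⟩ : ∃ m, n = m + 1 := ⟨n - 1, by omega⟩
  set n : ℕ := m + 1 with hndef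
  have hmpos : 0 < m := by omega
  have hmr : (0:ℝ) < (m:ℝ) := by exact_mod_cast hmpos
  set t : ℝ := γ * (n:ℝ) ^ ((1:ℝ)/2 + ε) with ht
  set X : ℝ := (n:ℝ) ^ (2*ε) with hX
  set Q : ℕ → Prop := fun r => t ≤ |(r:ℝ) - (n:ℝ)/2| with hQ
  have hb1 : ((lyndonWords 2 n).filter fun w =>
        t ≤ |(numRuns (List.ofFn w) : ℝ) - (n:ℝ) / 2|).card
      ≤ (Finset.univ.filter fun w : Fin n → Fin 2 => Q (numRuns (List.ofFn w))).card := by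
    apply Finset.card_le_card
    intro w hw
    rw [lyndonWords] at hw
    rw [Finset.mem_filter] at hw ⊢
    rw [Finset.mem_filter] at hw
    exact ⟨Finset.mem_univ _, hw.2⟩
  have hb2 := Stmt10Aux.badAll_le n (by omega) Q
  have hsubf : (Finset.range n).filter (fun c => Q (1+c))
      ⊆ (Finset.range n).filter (fun c : ℕ => t/2 ≤ |(c:ℝ) - (m:ℝ)/2|) := by
    intro c hc
    simp only [Finset.mem_filter, Finset.mem_range, hQ] at hc ⊢
    refine ⟨hc.1, ?_⟩
    have h := hc.2
    have hcast : ((1 + c : ℕ) : ℝ) = 1 + (c:ℝ) := by push_cast; ring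
    rw [hcast] at h
    have hmr2 : (m:ℝ) = (n:ℝ) - 1 := by rw [hndef]; push_cast; ring
    rw [hmr2]
    have hid : (c:ℝ) - ((n:ℝ)-1)/2 = (1 + (c:ℝ) - (n:ℝ)/2) - 1/2 := by ring
    rw [hid]
    rcases abs_cases ((1:ℝ) + (c:ℝ) - (n:ℝ)/2) with hh | hh <;>
      rcases abs_cases ((1:ℝ) + (c:ℝ) - (n:ℝ)/2 - 1/2) with hh2 | hh2 <;>
      linarith [htn, hh.1, hh2.1]
  have hb3 : ∑ c ∈ (Finset.range n).filter (fun c => Q (1+c)), (n-1).choose c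
      ≤ ∑ c ∈ (Finset.range n).filter (fun c : ℕ => t/2 ≤ |(c:ℝ) - (m:ℝ)/2|), (n-1).choose c :=
    Finset.sum_le_sum_of_subset hsubf
  have hchern := Stmt10Aux.binom_tail_abs m hmpos (t/2) (by linarith)
  have hrange : (Finset.range n) = Finset.range (m+1) := by rw [hndef]
  have hnm1 : n - 1 = m := by omega
  have hb4 : (((lyndonWords 2 n).filter fun w =>
        t ≤ |(numRuns (List.ofFn w) : ℝ) - (n:ℝ) / 2|).card : ℝ)
      ≤ 4 * 2^m * Real.exp (-2 * (t/2)^2 / m) := by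
    have hNat : ((lyndonWords 2 n).filter fun w =>
          t ≤ |(numRuns (List.ofFn w) : ℝ) - (n:ℝ) / 2|).card
        ≤ 2 * ∑ c ∈ (Finset.range n).filter (fun c : ℕ => t/2 ≤ |(c:ℝ) - (m:ℝ)/2|),
            (n-1).choose c := le_trans hb1 (le_trans hb2 (by omega))
    have hcastle : (((lyndonWords 2 n).filter fun w =>
          t ≤ |(numRuns (List.ofFn w) : ℝ) - (n:ℝ) / 2|).card : ℝ)
        ≤ 2 * ∑ c ∈ (Finset.range n).filter (fun c : ℕ => t/2 ≤ |(c:ℝ) - (m:ℝ)/2|),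
            (((n-1).choose c : ℕ) : ℝ) := by
      push_cast [← Nat.cast_sum]
      exact_mod_cast hNat
    rw [hrange, hnm1] at hcastle
    calc (((lyndonWords 2 n).filter fun w =>
          t ≤ |(numRuns (List.ofFn w) : ℝ) - (n:ℝ) / 2|).card : ℝ)
        ≤ 2 * ∑ c ∈ (Finset.range (m+1)).filter (fun c : ℕ => t/2 ≤ |(c:ℝ) - (m:ℝ)/2|),
            ((m.choose c : ℕ) : ℝ) := hcastle
      _ ≤ 2 * (2 * 2^m * Real.exp (-2 * (t/2)^2 / m)) := by linarith [hchern]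
      _ = 4 * 2^m * Real.exp (-2 * (t/2)^2 / m) := by ring
  -- exponent comparison
  have ht2 : t^2 = γ^2 * (n:ℝ) * X := by
    have e : ((n:ℝ)^((1:ℝ)/2+ε))^2 = (n:ℝ) * X := by
      rw [← Real.rpow_natCast ((n:ℝ)^((1:ℝ)/2+ε)) 2, ← Real.rpow_mul hn0.le,
        show ((1:ℝ)/2+ε) * ((2:ℕ):ℝ) = 1 + 2*ε by push_cast; ring,
        Real.rpow_add hn0, Real.rpow_one, hX]
    rw [ht, mul_pow, e]
    ring
  have hexple : -2 * (t/2)^2 / m ≤ -(γ^2/2) * X := by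
    have key : (γ^2/2) * X * (m:ℝ) ≤ 2 * (t/2)^2 := by
      have h1 : 2 * (t/2)^2 = t^2/2 := by ring
      have hmn' : (m:ℝ) ≤ (n:ℝ) := by exact_mod_cast (by omega : m ≤ n)
      rw [h1, ht2]
      nlinarith [hXnn, sq_nonneg γ]
    have h8 : (γ^2/2) * X ≤ 2 * (t/2)^2 / m := (le_div_iff₀ hmr).mpr key
    have h9 : -2*(t/2)^2/(m:ℝ) = -(2*(t/2)^2/(m:ℝ)) := by ring
    linarith [h8]
  have hb5 : (((lyndonWords 2 n).filter fun w =>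
        t ≤ |(numRuns (List.ofFn w) : ℝ) - (n:ℝ) / 2|).card : ℝ)
      ≤ 4 * 2^m * Real.exp (-(γ^2/2) * X) := by
    refine hb4.trans ?_
    exact mul_le_mul_of_nonneg_left (Real.exp_le_exp.mpr hexple) (by positivity)
  -- finish
  have hnX : (n:ℝ) ≤ Real.exp ((γ^2/4)*X) := by
    calc (n:ℝ) = Real.exp (Real.log (n:ℝ)) := (Real.exp_log hn0).symm
      _ ≤ Real.exp ((γ^2/4)*X) := Real.exp_le_exp.mpr hlogn
  have h7 : Real.exp (-(γ^2/2)*X) ≤ Real.exp (-(γ^2/4)*X) / (n:ℝ) := by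
    rw [le_div_iff₀ hn0]
    calc Real.exp (-(γ^2/2)*X) * (n:ℝ)
        ≤ Real.exp (-(γ^2/2)*X) * Real.exp ((γ^2/4)*X) :=
          mul_le_mul_of_nonneg_left hnX (Real.exp_pos _).le
      _ = Real.exp (-(γ^2/4)*X) := by rw [← Real.exp_add]; congr 1; ring
  have hfin : 4*(2:ℝ)^m*Real.exp (-(γ^2/2)*X)
      ≤ 64 * Real.exp (-(γ^2/4)*X) * ((2:ℝ)^n/(32*(n:ℝ))) := by
    calc 4*(2:ℝ)^m*Real.exp (-(γ^2/2)*X)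
        ≤ 4*(2:ℝ)^m*(Real.exp (-(γ^2/4)*X)/(n:ℝ)) :=
          mul_le_mul_of_nonneg_left h7 (by positivity)
      _ = 64 * Real.exp (-(γ^2/4)*X) * ((2:ℝ)^n/(32*(n:ℝ))) := by
          rw [hndef, pow_succ]
          have hc : ((m+1 : ℕ):ℝ) ≠ 0 := by positivity
          field_simp
          rw [pow_succ]
          ring
  rw [div_le_iff₀ hLposr]
  calc (((lyndonWords 2 n).filter fun w =>
        t ≤ |(numRuns (List.ofFn w) : ℝ) - (n:ℝ) / 2|).card : ℝ)
      ≤ 4 * 2^m * Real.exp (-(γ^2/2) * X) := hb5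
    _ ≤ 64 * Real.exp (-(γ^2/4)*X) * ((2:ℝ)^n/(32*(n:ℝ))) := hfin
    _ ≤ 64 * Real.exp (-(γ^2/4)*X) * ((lyndonWords 2 n).card : ℝ) :=
        mul_le_mul_of_nonneg_left hLr (by positivity)
    _ = 64 * Real.exp (-(γ^2/4) * X) * ((lyndonWords 2 n).card : ℝ) := by ring
end

section
/- Consider the alphabet {a, b} with a < b, and for each n let P̃_n be the uniform probability on the set of Lyndon words of length n, and M_n the length of the longest run. For every ε > 0, P̃_n(M_n ≤ (1−ε)·log₂ n) = O(exp(−n^ε/4)) as n → ∞; that is, there exist K > 0 and n_0 such that for all n ≥ n_0, P̃_n(M_n ≤ (1−ε)·log₂ n) ≤ K·exp(−n^ε/4). -/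
open scoped Classical

/-- The length of the longest run of a word: the largest m such that a block of
 consecutive equal letters occurs in the word. -/
noncomputable def maxRun {α : Type*} (l : List α) : ℕ :=
  sSup {m | ∃ c, List.replicate m c <:+: l}

open Finset

noncomputable def extF {n : ℕ} (w : Fin n → Fin 2) : ℕ → Fin 2 :=
  fun k => if h : k < n then w ⟨k, h⟩ else 0

lemma extF_lt {n : ℕ} (w : Fin n → Fin 2) (k : ℕ) (h : k < n) :
    extF w k = w ⟨k, h⟩ := by simp [extF, h]

def NR (m n : ℕ) (w : Fin n → Fin 2) : Prop :=
  ∀ i, i + m < n → ∃ j ≤ m, extF w (i + j) ≠ extF w i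

noncomputable def Sr (m n : ℕ) : Finset (Fin n → Fin 2) :=
  Finset.univ.filter (NR m n)

lemma fin2_eq_of_ne {a b c : Fin 2} (h1 : a ≠ c) (h2 : b ≠ c) : a = b := by
  revert a b c; decide

noncomputable def rfun {n : ℕ} (w : Fin n → Fin 2) : ℕ :=
  if h : ∃ k, 0 < k ∧ extF w k ≠ extF w 0 then Nat.find h else 0

noncomputable def tfun {n : ℕ} (w : Fin n → Fin 2) : Fin (n - rfun w) → Fin 2 :=
  fun k => extF w (rfun w + k)

lemma card_Sr_rec (m n : ℕ) (hm : 1 ≤ m) (hmn : m < n) :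
    (Sr m n).card ≤ ∑ r ∈ Finset.Icc 1 m, (Sr m (n - r)).card := by
  classical
  rw [← Finset.card_sigma]
  apply Finset.card_le_card_of_injOn (f := fun w => ⟨rfun w, tfun w⟩)
  · -- maps to
    intro w hw
    simp only [Sr, Finset.mem_coe, Finset.mem_filter, Finset.mem_univ, true_and] at hw
    -- existence of a change
    obtain ⟨j, hj, hne⟩ := hw 0 (by omega)
    simp only [zero_add] at hne
    have hex : ∃ k, 0 < k ∧ extF w k ≠ extF w 0 := ⟨j, ⟨Nat.pos_of_ne_zero (by rintro rfl; exact hne rfl), hne⟩⟩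
    have hr : rfun w = Nat.find hex := by simp [rfun, hex]
    have hrP : 0 < rfun w ∧ extF w (rfun w) ≠ extF w 0 := hr ▸ Nat.find_spec hex
    have hrle : rfun w ≤ m := by
      rw [hr]; exact (Nat.find_le ⟨Nat.pos_of_ne_zero (by rintro rfl; exact hne rfl), hne⟩).trans hj
    have hrpos : 1 ≤ rfun w := hrP.1
    simp only [Finset.mem_coe, Finset.mem_sigma, Finset.mem_Icc]
    refine ⟨⟨hrpos, hrle⟩, ?_⟩
    simp only [Sr, Finset.mem_filter, Finset.mem_univ, true_and]
    intro i hi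
    obtain ⟨j, hjm, hne2⟩ := hw (rfun w + i) (by omega)
    refine ⟨j, hjm, ?_⟩
    have h1 : extF (tfun w) (i + j) = extF w (rfun w + i + j) := by
      rw [extF_lt _ (i+j) (by omega)]
      simp only [tfun]
      congr 1
      omega
    have h2 : extF (tfun w) i = extF w (rfun w + i) := by
      rw [extF_lt _ i (by omega)]
      simp only [tfun]
    rw [h1, h2]; exact hne2
  · -- injective
    intro w hw w' hw' heq
    simp only [Sr, Finset.coe_filter, Set.mem_setOf_eq, Finset.mem_univ, true_and] at hw hw'
    have hr : rfun w = rfun w' := congrArg Sigma.fst heq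
    have hE : extF (tfun w) = extF (tfun w') :=
      congrArg (fun p : Σ r : ℕ, Fin (n - r) → Fin 2 => extF p.2) heq
    -- facts about rfun for members
    have fact : ∀ v : Fin n → Fin 2, NR m n v →
        ((0 < rfun v ∧ extF v (rfun v) ≠ extF v 0) ∧ ∀ k < rfun v, extF v k = extF v 0) := by
      intro v hv
      obtain ⟨j, hj, hne⟩ := hv 0 (by omega)
      simp only [zero_add] at hne
      have hex : ∃ k, 0 < k ∧ extF v k ≠ extF v 0 :=
        ⟨j, Nat.pos_of_ne_zero (by rintro rfl; exact hne rfl), hne⟩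
      have hrv : rfun v = Nat.find hex := by simp [rfun, hex]
      refine ⟨hrv ▸ Nat.find_spec hex, ?_⟩
      intro k hk
      rcases Nat.eq_zero_or_pos k with rfl | hk0
      · rfl
      · by_contra hne2
        have hle : Nat.find hex ≤ k := Nat.find_le ⟨hk0, hne2⟩
        rw [hrv] at hk
        omega
    obtain ⟨⟨hrpos, hrne⟩, hmin⟩ := fact w hw
    obtain ⟨⟨_, hrne'⟩, hmin'⟩ := fact w' hw'
    rw [hr] at hrne hmin
    -- extF w and extF w' agree everywhere
    have key : ∀ k, extF w k = extF w' k := by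
      have hge : ∀ k, rfun w' ≤ k → extF w k = extF w' k := by
        intro k hk
        by_cases hkn : k < n
        · have h1 : extF w k = extF (tfun w) (k - rfun w') := by
            rw [extF_lt (tfun w) _ (by rw [hr]; omega)]
            simp only [tfun]
            congr 1
            rw [hr]; omega
          have h2 : extF w' k = extF (tfun w') (k - rfun w') := by
            rw [extF_lt (tfun w') _ (by omega)]
            simp only [tfun]
            congr 1
            omega
          rw [h1, h2, hE]
        · simp [extF, hkn]
      intro k
      by_cases hk : rfun w' ≤ k
      · exact hge k hk
      · push_neg at hk
        have e0 : extF w 0 = extF w' 0 := by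
          have hR : extF w (rfun w') = extF w' (rfun w') := hge _ le_rfl
          have h1 : extF w 0 ≠ extF w' (rfun w') := by
            rw [← hR]; exact Ne.symm hrne
          exact fin2_eq_of_ne h1 (Ne.symm hrne')
        rcases Nat.eq_zero_or_pos k with rfl | hk0
        · exact e0
        · rw [hmin k hk, hmin' k hk, e0]
    funext i
    have := key i
    rwa [extF_lt w _ i.isLt, extF_lt w' _ i.isLt] at this

lemma half_pow_le_half (m : ℕ) (hm : 1 ≤ m) : ((1:ℝ)/2)^m ≤ 1/2 := by
  have := pow_le_pow_of_le_one (show (0:ℝ) ≤ 1/2 by norm_num) (by norm_num) hm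
  rwa [pow_one] at this

lemma lam_lower (m : ℕ) (hm : 1 ≤ m) : ((3:ℝ)/2) ≤ 2 - (1/2)^m := by
  have := half_pow_le_half m hm; linarith

lemma two_pow_mul_half_pow (m : ℕ) : (2:ℝ)^m * (1/2)^m = 1 := by
  rw [← mul_pow]; norm_num

lemma base_case (m n : ℕ) (hm : 1 ≤ m) (hnm : n ≤ m) :
    ((2:ℝ))^n ≤ 2 * (2 - (1/2)^m)^n := by
  have hlam : (2 - (1/2:ℝ)^m) = 2 * (1 - (1/2)^(m+1)) := by ring
  have hx : ((1:ℝ)/2)^(m+1) ≤ 1/2 := half_pow_le_half _ (by omega)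
  have hber : (1:ℝ) - n * (1/2)^(m+1) ≤ (1 - (1/2)^(m+1))^n := by
    have hp : (0:ℝ) < (1/2)^(m+1) := by positivity
    have := one_add_mul_le_pow (a := -((1:ℝ)/2)^(m+1)) (by nlinarith) n
    calc (1:ℝ) - n*(1/2)^(m+1) = 1 + n * (-((1:ℝ)/2)^(m+1)) := by ring
    _ ≤ (1 + -((1:ℝ)/2)^(m+1))^n := this
    _ = (1 - (1/2)^(m+1))^n := by ring_nf
  have hn2m : (n:ℝ) * (1/2)^(m+1) ≤ 1/2 := by
    have h1 : (n:ℝ) ≤ 2^m := by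
      have h := Nat.lt_two_pow_self (n := m)
      have : (n:ℕ) < 2^m := lt_of_le_of_lt hnm h
      exact_mod_cast this.le
    have hp : (0:ℝ) ≤ (1/2)^(m+1) := by positivity
    have h4 : (n:ℝ) * (1/2)^(m+1) ≤ (2:ℝ)^m * (1/2)^(m+1) :=
      mul_le_mul_of_nonneg_right h1 hp
    have h5 : (2:ℝ)^m * (1/2)^(m+1) = 1/2 := by
      rw [pow_succ, ← mul_assoc, two_pow_mul_half_pow]; norm_num
    linarith
  calc ((2:ℝ))^n = 2 * (2^n * (1/2)) := by ring
  _ ≤ 2 * (2^n * (1 - (1/2)^(m+1))^n) := by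
      have h2n : (0:ℝ) < 2^n := by positivity
      nlinarith
  _ = 2 * (2 * (1 - (1/2)^(m+1)))^n := by rw [mul_pow]
  _ = 2 * (2 - (1/2)^m)^n := by rw [← hlam]

lemma geom_step (m n : ℕ) (hm : 1 ≤ m) (hmn : m < n) :
    ∑ r ∈ Finset.Icc 1 m, (2 - (1/2:ℝ)^m)^(n-r) ≤ (2 - (1/2:ℝ)^m)^n := by
  set lam : ℝ := 2 - (1/2)^m with hlamdef
  have hlamv : lam = 2 - (1/2)^m := hlamdef
  clear_value lam
  have hlam1 : (3:ℝ)/2 ≤ lam := hlamv ▸ lam_lower m hm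
  have hlam2 : lam ≤ 2 := by
    have : (0:ℝ) ≤ (1/2)^m := by positivity
    simp only [hlamdef]; linarith
  have hre : ∑ r ∈ Finset.Icc 1 m, lam^(n-r) = ∑ k ∈ Finset.range m, lam^(n-m+k) := by
    rw [show Finset.Icc 1 m = Finset.Ico 1 (m+1) by rfl, Finset.sum_Ico_eq_sum_range]
    simp only [Nat.add_sub_cancel]
    rw [← Finset.sum_range_reflect]
    apply Finset.sum_congr rfl
    intro i hi
    simp only [Finset.mem_range] at hi
    congr 1
    omega
  rw [hre]
  have hgeom : ∑ k ∈ Finset.range m, lam^(n-m+k) = lam^(n-m) * ((lam^m - 1)/(lam - 1)) := by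
    rw [← geom_sum_eq (by intro h; rw [h] at hlam1; norm_num at hlam1) m]
    rw [Finset.mul_sum]
    apply Finset.sum_congr rfl
    intro k _
    rw [pow_add]
  rw [hgeom]
  have hkey : (lam^m - 1)/(lam - 1) ≤ lam^m := by
    rw [div_le_iff₀ (by linarith)]
    have h1 : lam^m * (2 - lam) ≤ 1 := by
      have : lam^m * (2 - lam) = lam^m * (1/2)^m := by rw [hlamv]; ring_nf
      rw [this, ← mul_pow]
      apply pow_le_one₀ (by linarith) (by linarith)
    nlinarith
  calc lam^(n-m) * ((lam^m - 1)/(lam - 1)) ≤ lam^(n-m) * lam^m := by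
        apply mul_le_mul_of_nonneg_left hkey (by positivity)
  _ = lam^n := by rw [← pow_add]; congr 1; omega

lemma card_Sr_le (m : ℕ) (hm : 1 ≤ m) : ∀ n, ((Sr m n).card : ℝ) ≤ 2 * (2 - (1/2)^m)^n := by
  intro n
  induction n using Nat.strong_induction_on with
  | _ n IH =>
    by_cases hnm : n ≤ m
    · have h1 : (Sr m n).card ≤ 2^n := by
        calc (Sr m n).card ≤ Finset.univ.card := Finset.card_le_card (Finset.subset_univ _)
        _ = 2^n := by rw [Finset.card_univ]; simp [Fintype.card_fun]
      calc ((Sr m n).card : ℝ) ≤ (2:ℝ)^n := by exact_mod_cast h1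
      _ ≤ 2 * (2 - (1/2)^m)^n := base_case m n hm hnm
    · push_neg at hnm
      have h1 := card_Sr_rec m n hm hnm
      have h2 : ((Sr m n).card : ℝ) ≤ ∑ r ∈ Finset.Icc 1 m, ((Sr m (n-r)).card : ℝ) := by
        exact_mod_cast h1
      have h3 : ∑ r ∈ Finset.Icc 1 m, ((Sr m (n-r)).card : ℝ)
          ≤ ∑ r ∈ Finset.Icc 1 m, 2 * (2 - (1/2:ℝ)^m)^(n-r) := by
        apply Finset.sum_le_sum
        intro r hr
        simp only [Finset.mem_Icc] at hr
        exact IH (n - r) (by omega)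
      have h4 := geom_step m n hm hnm
      calc ((Sr m n).card : ℝ) ≤ ∑ r ∈ Finset.Icc 1 m, 2 * (2 - (1/2:ℝ)^m)^(n-r) := h2.trans h3
      _ = 2 * ∑ r ∈ Finset.Icc 1 m, (2 - (1/2:ℝ)^m)^(n-r) := by rw [Finset.mul_sum]
      _ ≤ 2 * (2 - (1/2)^m)^n := by linarith




lemma run_le_maxRun {α : Type*} (l : List α) (k : ℕ) (c : α)
    (h : List.replicate k c <:+: l) : k ≤ maxRun l := by
  have hbdd : BddAbove {m | ∃ c, List.replicate m c <:+: l} := by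
    refine ⟨l.length, fun m hm => ?_⟩
    obtain ⟨c', hc⟩ := hm
    have := hc.length_le
    simpa using this
  exact le_csSup hbdd ⟨c, h⟩

lemma one_le_maxRun {n : ℕ} (hn : 1 ≤ n) (w : Fin n → Fin 2) :
    1 ≤ maxRun (List.ofFn w) := by
  have hmem : w ⟨0, hn⟩ ∈ List.ofFn w := by
    rw [List.mem_ofFn]; exact ⟨⟨0, hn⟩, rfl⟩
  obtain ⟨s, t, hst⟩ := List.append_of_mem hmem
  apply run_le_maxRun _ _ (w ⟨0, hn⟩)
  exact ⟨s, t, by simpa using hst.symm⟩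

lemma NR_of_maxRun_le {n m : ℕ} (w : Fin n → Fin 2)
    (h : maxRun (List.ofFn w) ≤ m) : NR m n w := by
  intro i hi
  by_contra hcon
  push_neg at hcon
  -- all of w i, ..., w (i+m) equal extF w i : run of length m+1
  set l := List.ofFn w with hl
  have hlen : l.length = n := by simp [hl]
  set seg := (l.drop i).take (m+1) with hseg
  have hlen2 : seg.length = m + 1 := by
    simp only [hseg, List.length_take, List.length_drop, hlen]
    omega
  have hrep : seg = List.replicate (m+1) (extF w i) := by
    apply List.ext_getElem
    · simp [hlen2]
    · intro j h1 h2
      rw [List.getElem_replicate]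
      have hj : j < m + 1 := by rwa [hlen2] at h1
      have : seg[j] = l[i + j]'(by omega) := by
        simp only [hseg]
        rw [List.getElem_take, List.getElem_drop]
      rw [this]
      have : l[i+j]'(by omega) = w ⟨i + j, by omega⟩ := by
        simp [hl]
      rw [this, ← extF_lt w (i+j) (by omega)]
      exact hcon j (by omega)
  have hinf : seg <:+: l := by
    apply List.IsInfix.trans (l₂ := l.drop i)
    · exact (List.take_prefix _ _).isInfix
    · exact (List.drop_suffix _ _).isInfix
  rw [hrep] at hinf
  have := run_le_maxRun l (m+1) (extF w i) hinf
  omega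


lemma lex_of_getElem {α : Type*} [LinearOrder α] :
    ∀ (k : ℕ) (l₁ l₂ : List α) (h₁ : k < l₁.length) (h₂ : k < l₂.length),
      (∀ j (hj₁ : j < k), l₁[j]'(by omega) = l₂[j]'(by omega)) →
      l₁[k] < l₂[k] → List.Lex (· < ·) l₁ l₂ := by
  intro k
  induction k with
  | zero =>
    intro l₁ l₂ h₁ h₂ _ hlt
    match l₁, l₂ with
    | a :: l₁, b :: l₂ =>
      simp only [List.getElem_cons_zero] at hlt
      exact List.Lex.rel hlt
  | succ k ih =>
    intro l₁ l₂ h₁ h₂ hagree hlt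
    match l₁, l₂ with
    | a :: l₁, b :: l₂ =>
      have hab : a = b := hagree 0 (by omega)
      subst hab
      apply List.Lex.cons
      apply ih l₁ l₂ (by simpa using h₁) (by simpa using h₂)
      · intro j hj
        have := hagree (j+1) (by omega)
        simpa using this
      · simpa using hlt


lemma fin2_eq_zero_of_ne_one {x : Fin 2} (h : x ≠ 1) : x = 0 := by
  revert x; decide

lemma isLyndon_of (n M : ℕ) (w : Fin n → Fin 2)
    (H0 : ∀ k < M, extF w k = 0)
    (Hstar : ∀ i, 1 ≤ i → i < n → ∃ j < M, i + j < n ∧ extF w (i+j) = 1) :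
    IsLyndon (List.ofFn w) := by
  intro i hi hilen
  rw [List.length_ofFn] at hilen
  obtain ⟨j', hj'⟩ := Hstar i hi hilen
  have hex : ∃ j, j < M ∧ i + j < n ∧ extF w (i+j) = 1 := ⟨j', hj'⟩
  set j₀ := Nat.find hex with hj₀def
  have hspec := Nat.find_spec hex
  rw [← hj₀def] at hspec
  obtain ⟨hj₀M, hj₀n, hj₀val⟩ := hspec
  have hmin : ∀ j, j < j₀ → extF w (i+j) = 0 := by
    intro j hj
    rw [hj₀def] at hj
    have hns := Nat.find_min hex hj
    push_neg at hns
    rw [← hj₀def] at hj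
    exact fin2_eq_zero_of_ne_one (hns (by omega) (by omega))
  clear_value j₀
  clear hj₀def
  apply lex_of_getElem j₀ _ _ (by simp; omega) (by simp; omega)
  · intro j hj
    have e1 : (List.ofFn w)[j]'(by simp; omega) = extF w j := by
      simp only [List.getElem_ofFn]
      rw [extF_lt w j (by omega)]
    have e2 : ((List.ofFn w).drop i)[j]'(by simp; omega) = extF w (i+j) := by
      rw [List.getElem_drop]
      simp only [List.getElem_ofFn]
      rw [extF_lt w (i+j) (by omega)]
    rw [e1, e2, hmin j hj, H0 j (by omega)]
  · have e1 : (List.ofFn w)[j₀]'(by simp; omega) = extF w j₀ := by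
      simp only [List.getElem_ofFn]
      rw [extF_lt w j₀ (by omega)]
    have e2 : ((List.ofFn w).drop i)[j₀]'(by simp; omega) = extF w (i+j₀) := by
      rw [List.getElem_drop]
      simp only [List.getElem_ofFn]
      rw [extF_lt w (i+j₀) (by omega)]
    rw [e1, e2, hj₀val, H0 j₀ hj₀M]
    decide


lemma fin2_eq_one_of_ne_zero {x : Fin 2} (h : x ≠ 0) : x = 1 := by revert x; decide

def goodT (M L : ℕ) (t : Fin L → Fin 2) : Prop :=
  ∀ i, i + M ≤ L → ∃ j < M, extF t (i + j) = 1

noncomputable def TS (M L : ℕ) : Finset (Fin L → Fin 2) :=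
  Finset.univ.filter (goodT M L)

-- union bound : card TS ≥ 2^L - (L-M+1) * 2^(L-M)
lemma card_TS_ge (M L : ℕ) (hM : 1 ≤ M) (hML : M ≤ L) :
    2^L ≤ (TS M L).card + (L - M + 1) * 2^(L-M) := by
  classical
  set bad : Finset (Fin L → Fin 2) :=
    Finset.univ.filter (fun t => ∃ i, i + M ≤ L ∧ ∀ j < M, extF t (i+j) = 0) with hbad
  have hcover : (Finset.univ : Finset (Fin L → Fin 2)) ⊆ TS M L ∪ bad := by
    intro t _
    by_cases h : t ∈ bad
    · exact Finset.mem_union_right _ h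
    · apply Finset.mem_union_left
      simp only [hbad, Finset.mem_filter, Finset.mem_univ, true_and, not_exists, not_and,
        not_forall] at h
      simp only [TS, Finset.mem_filter, Finset.mem_univ, true_and]
      intro i hi
      obtain ⟨j, hj, hne⟩ := h i hi
      exact ⟨j, hj, fin2_eq_one_of_ne_zero hne⟩
  have hbadcard : bad.card ≤ (L - M + 1) * 2^(L-M) := by
    have hsub : bad ⊆ (Finset.range (L-M+1)).biUnion
        (fun i => Finset.univ.filter (fun t : Fin L → Fin 2 => ∀ j < M, extF t (i+j) = 0)) := by
      intro t ht
      simp only [hbad, Finset.mem_filter, Finset.mem_univ, true_and] at ht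
      obtain ⟨i, hi, hall⟩ := ht
      apply Finset.mem_biUnion.mpr
      exact ⟨i, Finset.mem_range.mpr (by omega),
        Finset.mem_filter.mpr ⟨Finset.mem_univ _, hall⟩⟩
    have hA : ∀ i ∈ Finset.range (L-M+1),
        (Finset.univ.filter (fun t : Fin L → Fin 2 => ∀ j < M, extF t (i+j) = 0)).card
          ≤ 2^(L-M) := by
      intro i hi
      simp only [Finset.mem_range] at hi
      have : 2^(L-M) = (Finset.univ : Finset (Fin (L-M) → Fin 2)).card := by
        rw [Finset.card_univ]; simp
      rw [this]
      apply Finset.card_le_card_of_injOn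
        (f := fun t (k : Fin (L-M)) => extF t (if (k:ℕ) < i then (k:ℕ) else (k:ℕ) + M))
      · intro t _; exact Finset.mem_univ _
      · intro t ht t' ht' heq
        simp only [Finset.coe_filter, Set.mem_setOf_eq, Finset.mem_univ, true_and] at ht ht'
        funext p
        have hkey : ∀ q : ℕ, q < L → extF t q = extF t' q := by
          intro q hq
          rcases lt_or_ge q i with h1 | h1
          · have := congrFun heq ⟨q, by omega⟩
            simpa [h1] using this
          · rcases lt_or_ge q (i + M) with h2 | h2
            · have ha := ht (q - i) (by omega)
              have hb := ht' (q - i) (by omega)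
              rw [show i + (q - i) = q by omega] at ha hb
              rw [ha, hb]
            · have := congrFun heq ⟨q - M, by omega⟩
              have hcond : ¬ ((q - M : ℕ) < i) := by omega
              simp only [hcond, if_false] at this
              have hqM : q - M + M = q := by omega
              rwa [hqM] at this
        have := hkey p p.isLt
        rwa [extF_lt t _ p.isLt, extF_lt t' _ p.isLt] at this
    calc bad.card ≤ _ := Finset.card_le_card hsub
    _ ≤ ∑ i ∈ Finset.range (L-M+1), _ := Finset.card_biUnion_le
    _ ≤ ∑ i ∈ Finset.range (L-M+1), 2^(L-M) := Finset.sum_le_sum hA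
    _ = (L-M+1) * 2^(L-M) := by rw [Finset.sum_const, Finset.card_range, smul_eq_mul]
  have huniv : (Finset.univ : Finset (Fin L → Fin 2)).card = 2^L := by
    rw [Finset.card_univ]; simp
  calc 2^L = (Finset.univ : Finset (Fin L → Fin 2)).card := huniv.symm
  _ ≤ (TS M L ∪ bad).card := Finset.card_le_card hcover
  _ ≤ (TS M L).card + bad.card := Finset.card_union_le _ _
  _ ≤ (TS M L).card + (L - M + 1) * 2^(L-M) := by omega

noncomputable def Phi (n M : ℕ) {L : ℕ} (t : Fin L → Fin 2) : Fin n → Fin 2 :=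
  fun k => if (k:ℕ) < M then 0 else if (k:ℕ) = M then 1
    else if (k:ℕ) = n - 1 then 1 else extF t ((k:ℕ) - M - 1)

lemma card_lyndon_ge (n M : ℕ) (hM : 1 ≤ M) (hMn : M + 2 ≤ n) :
    (TS M (n - M - 2)).card ≤ (lyndonWords 2 n).card := by
  classical
  set L := n - M - 2 with hL
  apply Finset.card_le_card_of_injOn (f := Phi n M)
  · -- membership : Phi t is Lyndon
    intro t ht
    simp only [TS, Finset.mem_coe, Finset.mem_filter, Finset.mem_univ, true_and] at ht
    simp only [lyndonWords, Finset.mem_coe, Finset.mem_filter, Finset.mem_univ, true_and]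
    apply isLyndon_of n M
    · -- H0
      intro k hk
      rw [extF_lt _ k (by omega)]
      simp only [Phi, hk, if_true]
    · -- Hstar
      intro i hi1 hin
      rcases le_or_gt i M with hiM | hiM
      · refine ⟨M - i, by omega, by omega, ?_⟩
        rw [extF_lt _ _ (show i + (M - i) < n by omega)]
        simp only [Phi]
        have h1 : i + (M - i) = M := by omega
        simp [h1]
      · rcases lt_or_ge (n-1) (i + M) with hc | hc
        · refine ⟨n - 1 - i, by omega, by omega, ?_⟩
          rw [extF_lt _ _ (show i + (n - 1 - i) < n by omega)]
          simp only [Phi]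
          have h1 : i + (n - 1 - i) = n - 1 := by omega
          rw [h1]
          have h2 : ¬ (n - 1 < M) := by omega
          have h3 : ¬ (n - 1 = M) := by omega
          simp [h2, h3]
        · obtain ⟨j, hjM, hjval⟩ := ht (i - M - 1) (by omega)
          refine ⟨j, hjM, by omega, ?_⟩
          rw [extF_lt _ _ (show i + j < n by omega)]
          simp only [Phi]
          have h2 : ¬ (i + j < M) := by omega
          have h3 : ¬ (i + j = M) := by omega
          have h4 : ¬ (i + j = n - 1) := by omega
          have h5 : i + j - M - 1 = i - M - 1 + j := by omega
          simp only [h2, h3, h4, if_false, h5]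
          exact hjval
  · -- injectivity
    intro t ht t' ht' heq
    funext k
    have h1 : ∀ (s : Fin L → Fin 2), Phi n M s ⟨M + 1 + (k:ℕ), by omega⟩ = s k := by
      intro s
      simp only [Phi]
      have h2 : ¬ (M + 1 + (k:ℕ) < M) := by omega
      have h3 : ¬ (M + 1 + (k:ℕ) = M) := by omega
      have h4 : ¬ (M + 1 + (k:ℕ) = n - 1) := by
        have := k.isLt; omega
      have h5 : M + 1 + (k:ℕ) - M - 1 = (k:ℕ) := by omega
      simp only [h2, h3, h4, if_false, h5]
      exact extF_lt s _ k.isLt ▸ by simp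
    have := congrFun heq ⟨M + 1 + (k:ℕ), by have := k.isLt; omega⟩
    rwa [h1 t, h1 t'] at this

lemma pow_div_le_exp (k : ℕ) (hk : 1 ≤ k) (x : ℝ) (hx : 0 ≤ x) :
    (x / k)^k ≤ Real.exp x := by
  have h1 : x / k ≤ Real.exp (x / k) := by
    have := Real.add_one_le_exp (x / k)
    linarith
  have h2 : (x / k)^k ≤ (Real.exp (x / k))^k :=
    pow_le_pow_left₀ (by positivity) h1 k
  have h3 : (Real.exp (x / k))^k = Real.exp x := by
    rw [← Real.exp_nat_mul]
    congr 1
    field_simp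
  linarith [h2, h3.le, h3.ge]

-- 128 n ≤ exp (n^ε / 4) for n large
lemma eventually_exp (ε : ℝ) (hε : 0 < ε) :
    ∃ C : ℕ, ∀ n : ℕ, C ≤ n → 128 * (n:ℝ) ≤ Real.exp ((n:ℝ)^ε / 4) := by
  set k : ℕ := ⌈2/ε⌉₊ + 1 with hk
  have hk1 : 1 ≤ k := by omega
  have hεk : 2 ≤ ε * k := by
    have h1 : 2/ε ≤ (k:ℕ) := by
      have := Nat.le_ceil (2/ε)
      push_cast [hk]
      push_cast at this
      linarith
    calc (2:ℝ) = ε * (2/ε) := by field_simp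
    _ ≤ ε * k := by
        apply mul_le_mul_of_nonneg_left h1 hε.le
  clear_value k
  refine ⟨128 * (4*k)^k + 1, ?_⟩
  intro n hn
  have hn1 : 1 ≤ n := by omega
  have hnR : (1:ℝ) ≤ n := by exact_mod_cast hn1
  have hnpos : (0:ℝ) < n := by linarith
  have hrp : (0:ℝ) ≤ (n:ℝ)^ε := Real.rpow_nonneg hnpos.le ε
  have h1 : ((n:ℝ)^ε / 4 / k)^k ≤ Real.exp ((n:ℝ)^ε / 4) :=
    pow_div_le_exp k hk1 _ (by positivity)
  have h2 : ((n:ℝ)^ε)^k = (n:ℝ)^(ε * k) := by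
    rw [← Real.rpow_natCast ((n:ℝ)^ε) k, ← Real.rpow_mul hnpos.le]
  have h3 : (n:ℝ)^(2:ℝ) ≤ (n:ℝ)^(ε * k) :=
    Real.rpow_le_rpow_of_exponent_le hnR hεk
  have h4 : (n:ℝ)^(2:ℝ) = n * n := by
    rw [show (2:ℝ) = ((2:ℕ):ℝ) by norm_num, Real.rpow_natCast]
    ring
  have h5 : ((n:ℝ)^ε / 4 / k)^k = ((n:ℝ)^ε)^k / (4*k)^k := by
    rw [div_div, ← div_pow]
  have h6 : (128:ℝ) * (4*k)^k ≤ n := by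
    have : (128 * (4*k)^k + 1 : ℕ) ≤ n := hn
    have := (Nat.cast_le (α := ℝ)).mpr this
    push_cast at this
    linarith
  have hkpos : (0:ℝ) < (4*k)^k := by positivity
  have h7 : 128 * (n:ℝ) ≤ (n * n) / (4*k)^k := by
    rw [le_div_iff₀ hkpos]
    calc 128 * (n:ℝ) * (4*k)^k = (128 * (4*k)^k) * n := by ring
    _ ≤ n * n := by nlinarith
  calc 128 * (n:ℝ) ≤ (n*n) / (4*k)^k := h7
  _ ≤ (n:ℝ)^(ε*k) / (4*k)^k := by
      have h8 : (n:ℝ)*n ≤ (n:ℝ)^(ε*(k:ℝ)) := h4 ▸ h3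
      gcongr
  _ = ((n:ℝ)^ε)^k / (4*k)^k := by rw [h2]
  _ = ((n:ℝ)^ε / 4 / k)^k := h5.symm
  _ ≤ Real.exp ((n:ℝ)^ε / 4) := h1

lemma four_mul_le_two_pow : ∀ l, 4 ≤ l → 4 * l ≤ 2^l := by
  intro l hl
  induction l with
  | zero => omega
  | succ k ih =>
    rcases Nat.lt_or_ge k 4 with h | h
    · have hk3 : k = 3 := by omega
      subst hk3; norm_num
    · have := ih (by omega)
      have : 2^k ≥ 4 := by
        calc 2^k ≥ 4*k := this
        _ ≥ 4 := by omega
      rw [pow_succ]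
      omega

theorem stmt_11 (ε : ℝ) (hε : 0 < ε) :
    ∃ K : ℝ, 0 < K ∧ ∃ n₀ : ℕ, ∀ n : ℕ, n₀ ≤ n →
      (((lyndonWords 2 n).filter fun w =>
          (maxRun (List.ofFn w) : ℝ) ≤ (1 - ε) * (Real.log n / Real.log 2)).card : ℝ)
        / ((lyndonWords 2 n).card : ℝ)
      ≤ K * Real.exp (-(n : ℝ) ^ ε / 4) := by
  obtain ⟨C, hC⟩ := eventually_exp ε hε
  refine ⟨1, one_pos, max 16 C, ?_⟩
  intro n hn
  have hn16 : 16 ≤ n := le_trans (le_max_left _ _) hn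
  have hnC : C ≤ n := le_trans (le_max_right _ _) hn
  have hn1 : 1 ≤ n := by omega
  have hnpos : (0:ℝ) < n := by exact_mod_cast hn1
  -- parameters for the lower bound on the number of Lyndon words
  set l := Nat.log 2 n with hldef
  have hl4 : 4 ≤ l := Nat.le_log_of_pow_le (by norm_num) (by norm_num; omega)
  have h2l : 2^l ≤ n := Nat.pow_log_le_self 2 (by omega)
  have h4l : 4*l ≤ 2^l := four_mul_le_two_pow l hl4
  have hn2l : n < 2^(l+1) := Nat.lt_pow_succ_log_self (by norm_num) n
  set M := l + 3 with hMdef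
  have hMn : M + 2 ≤ n := by omega
  set L := n - M - 2 with hLdef
  have hML : M ≤ L := by omega
  -- Denominator lower bound
  have hTS := card_TS_ge M L (by omega) hML
  have hlyn := card_lyndon_ge n M (by omega) hMn
  have h2lR : (2:ℝ)^l ≤ n := by exact_mod_cast h2l
  have hn2lR : (n:ℝ) < 2^(l+1) := by exact_mod_cast hn2l
  have hD : (2:ℝ)^n / (64 * n) ≤ ((lyndonWords 2 n).card : ℝ) := by
    have hTSR : (2:ℝ)^L - (((L - M : ℕ):ℝ) + 1) * 2^(L-M) ≤ ((TS M L).card : ℝ) := by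
      have : ((2^L : ℕ):ℝ) ≤ (((TS M L).card + (L - M + 1) * 2^(L-M) : ℕ):ℝ) := by
        exact_mod_cast hTS
      push_cast at this
      linarith
    have hsplit : (2:ℝ)^(L-M) * 2^M = 2^L := by
      rw [← pow_add]; congr 1; omega
    have h2Mbig : (4:ℝ) * n ≤ 2^M := by
      have : (2:ℝ)^M = 8 * 2^l := by
        rw [hMdef]; ring
      rw [this]
      rw [pow_succ] at hn2lR
      linarith
    have hLM1 : (((L - M : ℕ):ℝ) + 1) ≤ n := by
      have h9 : L - M + 1 ≤ n := by omega
      have := (Nat.cast_le (α := ℝ)).mpr h9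
      push_cast at this
      linarith
    have h2Lpos : (0:ℝ) < 2^L := by positivity
    have h2LMpos : (0:ℝ) < 2^(L-M) := by positivity
    have hbadle : (((L - M : ℕ):ℝ) + 1) * 2^(L-M) ≤ 2^L / 4 := by
      have h1 : (((L - M : ℕ):ℝ) + 1) * 2^(L-M) ≤ (n:ℝ) * 2^(L-M) :=
        mul_le_mul_of_nonneg_right hLM1 h2LMpos.le
      have h2 : (n:ℝ) * 2^(L-M) * (4 * n) ≤ (n:ℝ) * 2^(L-M) * 2^M :=
        mul_le_mul_of_nonneg_left h2Mbig (by positivity)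
      have h3 : (n:ℝ) * 2^(L-M) * 2^M = (n:ℝ) * 2^L := by rw [mul_assoc, hsplit]
      nlinarith
    have hTShalf : (2:ℝ)^L / 2 ≤ ((TS M L).card : ℝ) := by linarith
    have hlynR : ((TS M L).card : ℝ) ≤ ((lyndonWords 2 n).card : ℝ) := by
      exact_mod_cast hlyn
    have hsplit2 : (2:ℝ)^L * 2^(M+2) = 2^n := by
      rw [← pow_add]; congr 1; omega
    have h2M2 : (2:ℝ)^(M+2) ≤ 32 * n := by
      have : (2:ℝ)^(M+2) = 32 * 2^l := by
        rw [hMdef]; ring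
      rw [this]; linarith
    have h2L : (2:ℝ)^n / (32 * n) ≤ 2^L := by
      rw [div_le_iff₀ (by positivity)]
      calc (2:ℝ)^n = 2^L * 2^(M+2) := hsplit2.symm
      _ ≤ 2^L * (32 * n) := mul_le_mul_of_nonneg_left h2M2 (by positivity)
    calc (2:ℝ)^n / (64 * n) = ((2:ℝ)^n / (32 * n)) / 2 := by ring
    _ ≤ (2:ℝ)^L / 2 := by linarith
    _ ≤ ((TS M L).card : ℝ) := hTShalf
    _ ≤ _ := hlynR
  have hDpos : (0:ℝ) < ((lyndonWords 2 n).card : ℝ) :=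
    lt_of_lt_of_le (by positivity) hD
  -- Numerator
  set Num := ((lyndonWords 2 n).filter fun w =>
      (maxRun (List.ofFn w) : ℝ) ≤ (1 - ε) * (Real.log n / Real.log 2)) with hNum
  rcases Finset.eq_empty_or_nonempty Num with hemp | hne
  · rw [hemp]
    simp only [Finset.card_empty, Nat.cast_zero, zero_div, one_mul]
    positivity
  · obtain ⟨w₀, hw₀⟩ := hne
    rw [hNum, Finset.mem_filter] at hw₀
    set x := (1 - ε) * (Real.log n / Real.log 2) with hxdef
    have h1x : (1:ℝ) ≤ x := by
      have h1 := one_le_maxRun hn1 w₀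
      have h2 : (1:ℝ) ≤ (maxRun (List.ofFn w₀) : ℝ) := by exact_mod_cast h1
      exact h2.trans hw₀.2
    set m := ⌊x⌋₊ with hmdef
    have hm1 : 1 ≤ m := Nat.le_floor (by exact_mod_cast h1x)
    have hsub : Num ⊆ Sr m n := by
      intro w hw
      rw [hNum, Finset.mem_filter] at hw
      have hmr : maxRun (List.ofFn w) ≤ m := Nat.le_floor hw.2
      simp only [Sr, Finset.mem_filter, Finset.mem_univ, true_and]
      exact NR_of_maxRun_le w hmr
    have hNumSr : (Num.card : ℝ) ≤ ((Sr m n).card : ℝ) := by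
      exact_mod_cast Finset.card_le_card hsub
    have hSr := card_Sr_le m hm1 n
    -- bound lambda^n by 2^n * exp(- n * (1/2)^(m+1))
    have hexp1 : (2 - (1/2:ℝ)^m)^n ≤ 2^n * Real.exp (-(n:ℝ) * (1/2)^(m+1)) := by
      have ha : (0:ℝ) < (1/2:ℝ)^(m+1) := by positivity
      have ha2 : (1/2:ℝ)^(m+1) ≤ 1/2 := half_pow_le_half _ (by omega)
      have hfac : (2 - (1/2:ℝ)^m) = 2 * (1 - (1/2)^(m+1)) := by ring
      have h1 : (1 - (1/2:ℝ)^(m+1)) ≤ Real.exp (-(1/2:ℝ)^(m+1)) := by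
        have := Real.add_one_le_exp (-(1/2:ℝ)^(m+1))
        linarith
      have h2 : (1 - (1/2:ℝ)^(m+1))^n ≤ (Real.exp (-(1/2:ℝ)^(m+1)))^n :=
        pow_le_pow_left₀ (by linarith) h1 n
      have h3 : (Real.exp (-(1/2:ℝ)^(m+1)))^n = Real.exp (-(n:ℝ) * (1/2)^(m+1)) := by
        rw [← Real.exp_nat_mul]
        congr 1
        ring
      calc (2 - (1/2:ℝ)^m)^n = 2^n * (1 - (1/2:ℝ)^(m+1))^n := by
            rw [hfac, mul_pow]
      _ ≤ 2^n * (Real.exp (-(1/2:ℝ)^(m+1)))^n := by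
            apply mul_le_mul_of_nonneg_left h2 (by positivity)
      _ = 2^n * Real.exp (-(n:ℝ) * (1/2)^(m+1)) := by rw [h3]
    -- n * (1/2)^(m+1) ≥ n^ε / 2
    have hna : (n:ℝ)^ε / 2 ≤ (n:ℝ) * (1/2)^(m+1) := by
      have hxnn : (0:ℝ) ≤ x := by linarith
      have hmx : (m:ℝ) ≤ x := Nat.floor_le hxnn
      have h2m : (2:ℝ)^m ≤ (n:ℝ)^(1-ε) := by
        have e1 : (2:ℝ)^m = (2:ℝ)^((m:ℕ):ℝ) := (Real.rpow_natCast 2 m).symm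
        have e2 : (2:ℝ)^((m:ℕ):ℝ) ≤ (2:ℝ)^x :=
          Real.rpow_le_rpow_of_exponent_le one_le_two hmx
        have e3 : (2:ℝ)^x = (n:ℝ)^(1-ε) := by
          rw [Real.rpow_def_of_pos (by norm_num : (0:ℝ) < 2),
            Real.rpow_def_of_pos hnpos]
          congr 1
          rw [hxdef]
          have hlog2 : Real.log 2 ≠ 0 := by
            have := Real.log_pos (by norm_num : (1:ℝ) < 2)
            linarith
          field_simp
        rw [e1]; rw [← e3]; exact e2
      have hrp : (0:ℝ) < (n:ℝ)^(1-ε) := Real.rpow_pos_of_pos hnpos _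
      have h2mpos : (0:ℝ) < (2:ℝ)^m := by positivity
      have hkey : (n:ℝ) * (1/2)^(m+1) = (n:ℝ) / (2 * 2^m) := by
        have e9 : ((1:ℝ)/2)^(m+1) = 1/(2*2^m) := by
          rw [div_pow, one_pow, pow_succ]; ring
        rw [e9]; ring
      have hkey2 : (n:ℝ)^ε / 2 = (n:ℝ) / (2 * (n:ℝ)^(1-ε)) := by
        rw [eq_div_iff (by positivity)]
        rw [show (n:ℝ)^ε / 2 * (2*(n:ℝ)^(1-ε)) = (n:ℝ)^ε * (n:ℝ)^(1-ε) from by ring,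
          ← Real.rpow_add hnpos]
        norm_num
      rw [hkey, hkey2]
      apply div_le_div_of_nonneg_left hnpos.le (by positivity)
      linarith
    have hNum2 : (Num.card : ℝ) ≤ 2 * 2^n * Real.exp (-(n:ℝ)^ε / 2) := by
      have hmono : Real.exp (-(n:ℝ) * (1/2)^(m+1)) ≤ Real.exp (-(n:ℝ)^ε / 2) := by
        apply Real.exp_le_exp.mpr
        linarith
      calc (Num.card : ℝ) ≤ ((Sr m n).card : ℝ) := hNumSr
      _ ≤ 2 * (2 - (1/2:ℝ)^m)^n := hSr
      _ ≤ 2 * (2^n * Real.exp (-(n:ℝ) * (1/2)^(m+1))) := by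
          apply mul_le_mul_of_nonneg_left hexp1 (by norm_num)
      _ ≤ 2 * (2^n * Real.exp (-(n:ℝ)^ε / 2)) := by
          apply mul_le_mul_of_nonneg_left
            (mul_le_mul_of_nonneg_left hmono (by positivity)) (by norm_num)
      _ = 2 * 2^n * Real.exp (-(n:ℝ)^ε / 2) := by ring
    -- final chain
    have hfrac : (Num.card : ℝ) / ((lyndonWords 2 n).card : ℝ)
        ≤ (2 * 2^n * Real.exp (-(n:ℝ)^ε / 2)) / ((2:ℝ)^n / (64 * n)) := by
      apply div_le_div₀ (by positivity) hNum2 (by positivity) hD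
    have heq1 : (2 * 2^n * Real.exp (-(n:ℝ)^ε / 2)) / ((2:ℝ)^n / (64 * n))
        = 128 * n * Real.exp (-(n:ℝ)^ε / 2) := by
      have h2n : (0:ℝ) < 2^n := by positivity
      field_simp
      ring
    have hfin : 128 * (n:ℝ) * Real.exp (-(n:ℝ)^ε / 2) ≤ Real.exp (-(n:ℝ)^ε / 4) := by
      have h1 := hC n hnC
      have h2 : (0:ℝ) < Real.exp (-(n:ℝ)^ε / 2) := Real.exp_pos _
      calc 128 * (n:ℝ) * Real.exp (-(n:ℝ)^ε / 2)
          ≤ Real.exp ((n:ℝ)^ε / 4) * Real.exp (-(n:ℝ)^ε / 2) :=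
            mul_le_mul_of_nonneg_right h1 h2.le
      _ = Real.exp ((n:ℝ)^ε / 4 + -(n:ℝ)^ε / 2) := (Real.exp_add _ _).symm
      _ = Real.exp (-(n:ℝ)^ε / 4) := by
            rw [show (n:ℝ)^ε / 4 + -(n:ℝ)^ε / 2 = -(n:ℝ)^ε / 4 from by ring]
    rw [one_mul]
    calc (Num.card : ℝ) / ((lyndonWords 2 n).card : ℝ)
        ≤ (2 * 2^n * Real.exp (-(n:ℝ)^ε / 2)) / ((2:ℝ)^n / (64 * n)) := hfrac
    _ = 128 * n * Real.exp (-(n:ℝ)^ε / 2) := heq1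
    _ ≤ Real.exp (-(n:ℝ)^ε / 4) := hfin
end

section
/- Consider the alphabet {a, b} with a < b, and for each n let P̃_n be the uniform probability on the set of Lyndon words of length n, M_n the length of the longest run, and M_n^a the length of the longest run of the letter a. For every real A with 1 < A ≤ 2, P̃_n(M_n^a ≥ A·log₂ n) ≤ P̃_n(M_n ≥ A·log₂ n) = O(n^{1−A}) as n → ∞; that is, there exist K > 0 and n_0 such that for all n ≥ n_0, P̃_n(M_n ≥ A·log₂ n) ≤ K·n^{1−A}. -/
open scoped Classical

/-- The length of the longest run of the letter `c` in a word. -/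
noncomputable def maxRunOf {α : Type*} (c : α) (l : List α) : ℕ :=
  sSup {m | List.replicate m c <:+: l}

set_option linter.unusedSectionVars false

section Aux
open List

variable {α : Type*} [LinearOrder α]

/-- If `Lex x y` then either `x` is a prefix of `y`, or appending anything to `x`
keeps it lexicographically smaller. -/
lemma lex_prefix_or_append {x y : List α} (h : List.Lex (·<·) x y) :
    x <+: y ∨ ∀ z : List α, List.Lex (·<·) (x ++ z) y := by
  induction h with
  | nil => exact Or.inl (List.nil_prefix)
  | @cons a l₁ l₂ h ih =>
      rcases ih with h1 | h2
      · exact Or.inl (List.cons_prefix_cons.mpr ⟨rfl, h1⟩)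
      · exact Or.inr fun z => List.Lex.cons (h2 z)
  | @rel a l₁ b l₂ hab =>
      exact Or.inr fun z => List.Lex.rel hab

lemma lex_append_right_of_lex {x y : List α} (h : List.Lex (·<·) x y)
    (hlen : y.length ≤ x.length) (z : List α) : List.Lex (·<·) x (y ++ z) := by
  induction h generalizing z with
  | nil => simp at hlen
  | @cons a l₁ l₂ h ih => exact List.Lex.cons (ih (by simpa using hlen) z)
  | @rel a l₁ b l₂ hab => exact List.Lex.rel hab

/-- appending on the right preserves Lex when lengths are equal. -/
lemma lex_append_same {t p : List α} (h : List.Lex (·<·) t p) (hl : t.length = p.length)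
    (s : List α) : List.Lex (·<·) (t ++ s) (p ++ s) := by
  induction h with
  | nil => simp at hl
  | @cons a l₁ l₂ h ih => exact List.Lex.cons (ih (by simpa using hl))
  | @rel a l₁ b l₂ hab => exact List.Lex.rel hab

lemma lex_append_left_iff {s t u : List α} :
    List.Lex (·<·) (s ++ t) (s ++ u) ↔ List.Lex (·<·) t u := by
  induction s with
  | nil => simp
  | cons a s ih => simpa [List.lex_cons_iff] using ih

open List

variable {n : ℕ} {α : Type*}

/-- rotation of a word given as a function on `Fin n`. -/
def rotW [NeZero n] (w : Fin n → α) (j : Fin n) : Fin n → α := fun i => w (i + j)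

lemma rotW_rotW [NeZero n] (w : Fin n → α) (a b : Fin n) :
    rotW (rotW w a) b = rotW w (b + a) := by
  funext i; simp [rotW, add_assoc]

lemma rotW_zero [NeZero n] (w : Fin n → α) : rotW w 0 = w := by
  funext i; simp [rotW]

lemma ofFn_rotW [NeZero n] (w : Fin n → α) (j : Fin n) :
    List.ofFn (rotW w j) = (List.ofFn w).drop j.val ++ (List.ofFn w).take j.val := by
  have hn : 0 < n := Nat.pos_of_ne_zero (NeZero.ne n)
  apply List.ext_getElem
  · simp [Nat.sub_add_cancel j.2.le, min_eq_left j.2.le]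
  · intro i h1 h2
    have h1' : i < n := by simpa using h1
    simp only [List.getElem_ofFn, rotW]
    rcases lt_or_ge i (n - j.val) with hi | hi
    · rw [List.getElem_append_left (by simp; omega)]
      simp only [List.getElem_drop, List.getElem_ofFn]
      congr 1
      apply Fin.ext
      simp [Fin.add_def, Nat.mod_eq_of_lt (by omega : i + j.val < n)]
      omega
    · rw [List.getElem_append_right (by simp; omega)]
      simp only [List.getElem_take, List.getElem_ofFn]
      congr 1
      apply Fin.ext
      simp only [Fin.add_def]
      have : (i + j.val) = n + (i - (n - j.val)) := by omega
      rw [this, Nat.add_mod_left, Nat.mod_eq_of_lt (by omega)]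
      simp [List.length_drop]

section Lyndon
variable {n : ℕ} [NeZero n] {β : Type*} [LinearOrder β]

lemma length_ofFn' (w : Fin n → β) : (List.ofFn w).length = n := by simp

lemma lyndon_lex_rot {w : Fin n → β} (hw : IsLyndon (List.ofFn w)) {j : Fin n} (hj : j ≠ 0) :
    List.Lex (·<·) (List.ofFn w) (List.ofFn (rotW w j)) := by
  have hjv : j.val ≠ 0 := Fin.val_ne_zero_iff.mpr hj
  have h := hw j.val (by omega) (by simp [j.2])
  rw [ofFn_rotW]
  exact lex_append_right_of_lex h (by simp) _

lemma lyndon_aperiodic {w : Fin n → β} (hw : IsLyndon (List.ofFn w)) {j : Fin n}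
    (hj : rotW w j = w) : j = 0 := by
  by_contra hj0
  have h := lyndon_lex_rot hw hj0
  rw [hj] at h
  exact asymm h h

lemma lyndon_rot_eq {w w' : Fin n → β} (hw : IsLyndon (List.ofFn w))
    (hw' : IsLyndon (List.ofFn w')) {j : Fin n} (hj : rotW w j = w') : w = w' := by
  rcases eq_or_ne j 0 with rfl | hj0
  · rw [← hj, rotW_zero]
  · have h1 : List.Lex (·<·) (List.ofFn w) (List.ofFn w') := hj ▸ lyndon_lex_rot hw hj0
    have hj' : rotW w' (-j) = w := by
      rw [← hj, rotW_rotW, neg_add_cancel, rotW_zero]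
    have hj0' : (-j : Fin n) ≠ 0 := by
      intro h; exact hj0 (by rwa [neg_eq_zero] at h)
    have h2 : List.Lex (·<·) (List.ofFn w') (List.ofFn w) := hj' ▸ lyndon_lex_rot hw' hj0'
    exact absurd h2 (asymm h1)

/-- a word minimal among its rotations is Lyndon or periodic. -/
lemma min_rot_lyndon_or_periodic {v : Fin n → β}
    (hmin : ∀ j : Fin n, ¬ List.Lex (·<·) (List.ofFn (rotW v j)) (List.ofFn v)) :
    IsLyndon (List.ofFn v) ∨ ∃ j : Fin n, j ≠ 0 ∧ rotW v j = v := by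
  by_cases hL : IsLyndon (List.ofFn v)
  · exact Or.inl hL
  right
  simp only [IsLyndon, not_forall] at hL
  obtain ⟨i, hi0, hin, hnl⟩ := hL
  rw [length_ofFn'] at hin
  obtain ⟨s, hs⟩ : ∃ s, (List.ofFn v).drop i = s := ⟨_, rfl⟩
  obtain ⟨p, hp⟩ : ∃ p, (List.ofFn v).take i = p := ⟨_, rfl⟩
  rw [hs] at hnl
  have hslen : s.length = n - i := by rw [← hs]; simp
  have hplen : p.length = i := by rw [← hp]; simp; omega
  have hps : p ++ s = List.ofFn v := by rw [← hs, ← hp]; exact List.take_append_drop i _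
  have hj1 : (⟨i, hin⟩ : Fin n) ≠ 0 := by simp [Fin.ext_iff]; omega
  have hrot1 : List.ofFn (rotW v ⟨i, hin⟩) = s ++ p := by
    rw [ofFn_rotW, hs, hp]
  have hsl : List.Lex (·<·) s (List.ofFn v) := by
    rcases lt_trichotomy s (List.ofFn v) with h1|h1|h1
    · exact h1
    · exfalso; apply_fun List.length at h1; rw [hslen, length_ofFn'] at h1; omega
    · exact absurd h1 hnl
  rcases lex_prefix_or_append hsl with hpre | hall
  · -- s is a prefix of ofFn v : ofFn v = s ++ t
    obtain ⟨t, hst⟩ := hpre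
    have htlen : t.length = i := by
      apply_fun List.length at hst
      rw [List.length_append, hslen, length_ofFn'] at hst; omega
    have hj2 : (⟨n - i, by omega⟩ : Fin n) ≠ 0 := by simp [Fin.ext_iff]; omega
    have hrot2 : List.ofFn (rotW v ⟨n - i, by omega⟩) = t ++ s := by
      rw [ofFn_rotW]
      have h1 : (List.ofFn v).drop (n - i) = t := by
        rw [← hst, ← hslen, List.drop_left]
      have h2 : (List.ofFn v).take (n - i) = s := by
        rw [← hst, ← hslen, List.take_left]
      show (List.ofFn v).drop (n - i) ++ (List.ofFn v).take (n - i) = t ++ s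
      rw [h1, h2]
    rcases lt_trichotomy p t with h1|h1|h1
    · exfalso
      apply hmin ⟨i, hin⟩
      rw [hrot1, ← hst]
      exact lex_append_left_iff.mpr h1
    · refine ⟨⟨i, hin⟩, hj1, ?_⟩
      apply List.ofFn_injective
      rw [hrot1, h1, hst]
    · exfalso
      apply hmin ⟨n - i, by omega⟩
      rw [hrot2, ← hps]
      exact lex_append_same h1 (by omega) s
  · exact absurd (by rw [hrot1]; exact hall p) (hmin ⟨i, hin⟩)

end Lyndon

section MaxRunNS
variable {α : Type*} [Inhabited α] (l : List α)

lemma maxRun_bdd : BddAbove {m | ∃ c : α, List.replicate m c <:+: l} := by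
  refine ⟨l.length, fun m hm => ?_⟩
  obtain ⟨c, hc⟩ := hm
  simpa using hc.length_le

lemma maxRunOf_bdd (c : α) : BddAbove {m | List.replicate m c <:+: l} := by
  refine ⟨l.length, fun m hm => ?_⟩
  simpa using (hm : _ <:+: l).length_le

lemma maxRun_le_length : maxRun l ≤ l.length := by
  have h0 : 0 ∈ {m | ∃ c : α, List.replicate m c <:+: l} := ⟨default, by simp⟩
  apply csSup_le ⟨0, h0⟩
  intro m hm
  obtain ⟨c, hc⟩ := hm
  simpa using hc.length_le

lemma maxRunOf_le_maxRun (c : α) : maxRunOf c l ≤ maxRun l := by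
  apply csSup_le_csSup (maxRun_bdd l) ⟨0, by simp⟩
  intro m hm
  exact ⟨c, hm⟩

lemma exists_replicate_of_le_maxRun {m : ℕ} (hm : m ≤ maxRun l) :
    ∃ c : α, List.replicate m c <:+: l := by
  have hne : {k | ∃ c : α, List.replicate k c <:+: l}.Nonempty := ⟨0, default, by simp⟩
  have hmem := Nat.sSup_mem hne (maxRun_bdd l)
  obtain ⟨c, hc⟩ := hmem
  have hpre : List.replicate m c <+: List.replicate (sSup {k | ∃ c : α, List.replicate k c <:+: l}) c :=
    List.prefix_iff_eq_take.mpr (by simp [List.take_replicate, min_eq_left hm, maxRun] at hm ⊢; omega)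
  exact ⟨c, hpre.isInfix.trans hc⟩

lemma le_maxRun_of_replicate {m : ℕ} {c : α}
    (h : List.replicate m c <:+: l) : m ≤ maxRun l :=
  le_csSup (maxRun_bdd l) ⟨c, h⟩

end MaxRunNS

end Aux

section Count
open Finset

variable {n : ℕ} [NeZero n]

/-- reduction of a natural number index into `Fin n`. -/
def idxF (n : ℕ) [NeZero n] (k : ℕ) : Fin n :=
  ⟨k % n, Nat.mod_lt _ (Nat.pos_of_ne_zero (NeZero.ne n))⟩

/-- words having a (cyclic) run of `m` letters `c` starting at `p`. -/
def runAt (m : ℕ) (p : Fin n) (c : Fin 2) : Finset (Fin n → Fin 2) :=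
  univ.filter fun v => ∀ k < m, v (p + idxF n k) = c

/-- words having some cyclic run of length `m`. -/
def cycE (n m : ℕ) [NeZero n] : Finset (Fin n → Fin 2) :=
  univ.filter fun v => ∃ c p, ∀ k < m, v (p + idxF n k) = c

lemma card_runAt {m : ℕ} (hm : m ≤ n) (p : Fin n) (c : Fin 2) :
    (runAt m p c).card ≤ 2 ^ (n - m) := by
  classical
  set S : Finset (Fin n) := (Finset.range m).image (fun k => p + idxF n k) with hS
  have hcardS : S.card = m := by
    rw [hS, card_image_of_injOn, card_range]
    intro k1 h1 k2 h2 he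
    simp only [Finset.mem_coe, Finset.mem_range] at h1 h2
    have : idxF n k1 = idxF n k2 := by
      have := add_left_cancel he
      exact this
    have hv : k1 % n = k2 % n := congrArg Fin.val this
    rwa [Nat.mod_eq_of_lt (lt_of_lt_of_le h1 hm), Nat.mod_eq_of_lt (lt_of_lt_of_le h2 hm)] at hv
  have hinj : Set.InjOn (fun (v : Fin n → Fin 2) (i : ↑((univ : Finset (Fin n)) \ S)) => v i.val) ↑(runAt m p c) := by
    intro v hv v' hv' he
    simp only [runAt, Finset.mem_coe, Finset.mem_filter] at hv hv'
    funext i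
    by_cases hi : i ∈ S
    · simp only [hS, mem_image, mem_range] at hi
      obtain ⟨k, hk, rfl⟩ := hi
      rw [hv.2 k hk, hv'.2 k hk]
    · exact congrFun he ⟨i, by simp [hi]⟩
  calc (runAt m p c).card ≤ (univ : Finset (↑((univ : Finset (Fin n)) \ S) → Fin 2)).card := by
        apply Finset.card_le_card_of_injOn _ (fun _ _ => mem_univ _) hinj
    _ = 2 ^ (n - m) := by
        rw [card_univ, Fintype.card_fun, Fintype.card_coe, card_sdiff_of_subset (subset_univ S),
          card_univ, hcardS]
        simp

lemma card_cycE {m : ℕ} (hm : m ≤ n) : (cycE n m).card ≤ 2 * n * 2 ^ (n - m) := by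
  classical
  have hsub : cycE n m ⊆ (univ : Finset (Fin 2 × Fin n)).biUnion
      (fun cp => runAt m cp.2 cp.1) := by
    intro v hv
    simp only [cycE, Finset.mem_filter] at hv
    obtain ⟨-, c, p, h⟩ := hv
    exact Finset.mem_biUnion.mpr ⟨(c, p), mem_univ _, by simp only [runAt, Finset.mem_filter]; exact ⟨mem_univ _, h⟩⟩
  calc (cycE n m).card ≤ _ := card_le_card hsub
    _ ≤ ∑ cp : Fin 2 × Fin n, (runAt m cp.2 cp.1).card := card_biUnion_le
    _ ≤ ∑ _cp : Fin 2 × Fin n, 2 ^ (n - m) := by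
        exact Finset.sum_le_sum (fun cp _ => card_runAt hm cp.2 cp.1)
    _ = 2 * n * 2 ^ (n - m) := by
        simp [Finset.sum_const, Fintype.card_prod, mul_assoc]

lemma rot_mem_cycE {m : ℕ} {v : Fin n → Fin 2} (hv : v ∈ cycE n m) (j : Fin n) :
    rotW v j ∈ cycE n m := by
  simp only [cycE, Finset.mem_filter] at hv ⊢
  obtain ⟨-, c, p, h⟩ := hv
  refine ⟨mem_univ _, c, p - j, fun k hk => ?_⟩
  have : p - j + idxF n k + j = p + idxF n k := by
    rw [add_right_comm, sub_add_cancel]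
  rw [rotW, this]
  exact h k hk

lemma mem_cycE_of_maxRun {m : ℕ} {w : Fin n → Fin 2} (h : m ≤ maxRun (List.ofFn w)) :
    w ∈ cycE n m := by
  obtain ⟨c, hc⟩ := exists_replicate_of_le_maxRun _ h
  obtain ⟨u, t, hut⟩ := hc
  have hlen : u.length + m + t.length = n := by
    apply_fun List.length at hut
    simp [List.length_append] at hut
    omega
  refine Finset.mem_filter.mpr ⟨mem_univ _, c, idxF n u.length, fun k hk => ?_⟩
  have hkn : u.length + k < n := by omega
  have hidx : idxF n u.length + idxF n k = (⟨u.length + k, hkn⟩ : Fin n) := by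
    apply Fin.ext
    simp only [Fin.add_def, idxF]
    rw [Nat.mod_eq_of_lt (by omega : u.length < n), Nat.mod_eq_of_lt (by omega : k < n),
      Nat.mod_eq_of_lt hkn]
  rw [hidx]
  have hget : (List.ofFn w)[u.length + k]'(by simpa using hkn) = c := by
    simp only [← hut]
    rw [List.getElem_append_left (by simp; omega : u.length + k < (u ++ List.replicate m c).length)]
    rw [List.getElem_append_right (by simp : u.length ≤ u.length + k)]
    simp
  simpa using hget

lemma card_mul_le_cycE {m : ℕ} (F : Finset (Fin n → Fin 2))
    (hF : ∀ w ∈ F, IsLyndon (List.ofFn w) ∧ w ∈ cycE n m) :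
    F.card * n ≤ (cycE n m).card := by
  classical
  have h := Finset.card_le_card_of_injOn
    (f := fun wj : (Fin n → Fin 2) × Fin n => rotW wj.1 wj.2)
    (s := F ×ˢ (univ : Finset (Fin n))) (t := cycE n m)
    (fun wj hwj => by
      rw [Finset.mem_coe, Finset.mem_product] at hwj
      exact rot_mem_cycE ((hF _ hwj.1).2) _)
    (by
      rintro ⟨w, j⟩ hwj ⟨w', j'⟩ hwj' he
      simp only [Finset.mem_coe, Finset.mem_product] at hwj hwj'
      have hw := (hF _ hwj.1).1
      have hw' := (hF _ hwj'.1).1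
      simp only at he
      have hrot : rotW w (-j' + j) = w' := by
        rw [← rotW_rotW, he, rotW_rotW, neg_add_cancel, rotW_zero]
      have hww' : w = w' := lyndon_rot_eq hw hw' hrot
      subst hww'
      have hper : rotW w (-j' + j) = w := hrot
      have hj0 : -j' + j = 0 := lyndon_aperiodic hw hper
      have : j = j' := by
        have := congrArg (fun x => j' + x) hj0
        simpa [← add_assoc, add_neg_cancel] using this
      simp [this])
  simpa [Finset.card_product] using h

/-- periodic words. -/
def perW (n : ℕ) [NeZero n] : Finset (Fin n → Fin 2) :=
  Finset.univ.filter fun v => ∃ j : Fin n, j ≠ 0 ∧ rotW v j = v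

/-- words with (descending) period `j`. -/
def fixB (n : ℕ) [NeZero n] (j : ℕ) : Finset (Fin n → Fin 2) :=
  Finset.univ.filter fun v => ∀ i : ℕ, (h : i < n) → j ≤ i → v ⟨i, h⟩ = v ⟨i - j, by omega⟩

lemma mem_fixB_of_rot {v : Fin n → Fin 2} {j : Fin n} (hj : rotW v j = v) :
    v ∈ fixB n j.val := by
  refine Finset.mem_filter.mpr ⟨mem_univ _, fun i hi hji => ?_⟩
  have h := congrFun hj ⟨i - j.val, by omega⟩
  have hidx : (⟨i - j.val, by omega⟩ : Fin n) + j = ⟨i, hi⟩ := by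
    apply Fin.ext
    simp only [Fin.add_def]
    rw [Nat.sub_add_cancel hji, Nat.mod_eq_of_lt hi]
  rw [rotW, hidx] at h
  exact h

lemma card_fixB {j : ℕ} (hj : 1 ≤ j) (hj2 : j ≤ n / 2) : (fixB n j).card ≤ 2 ^ (n / 2) := by
  classical
  have hinj : Set.InjOn
      (fun (v : Fin n → Fin 2) (i : Fin (n / 2)) => v (Fin.castLE (Nat.div_le_self n 2) i))
      ↑(fixB n j) := by
    intro v hv v' hv' he
    simp only [Finset.mem_coe, fixB, Finset.mem_filter] at hv hv'
    funext i
    obtain ⟨i, hi⟩ := i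
    induction i using Nat.strong_induction_on with
    | _ i ih =>
      rcases lt_or_ge i (n / 2) with hhalf | hhalf
      · exact congrFun he ⟨i, hhalf⟩
      · have hji : j ≤ i := le_trans hj2 hhalf
        rw [hv.2 i hi hji, hv'.2 i hi hji]
        exact ih (i - j) (by omega) (by omega)
  calc (fixB n j).card ≤ (univ : Finset (Fin (n / 2) → Fin 2)).card :=
        Finset.card_le_card_of_injOn _ (fun _ _ => mem_univ _) hinj
    _ = 2 ^ (n / 2) := by rw [card_univ, Fintype.card_fun]; simp

lemma card_perW : (perW n).card ≤ n * 2 ^ (n / 2) := by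
  classical
  have hsub : perW n ⊆ (Finset.Icc 1 (n / 2)).biUnion (fun j => fixB n j) := by
    intro v hv
    simp only [perW, Finset.mem_filter] at hv
    obtain ⟨-, jf, hjf0, hjf⟩ := hv
    have hjfv : 1 ≤ jf.val := by
      rcases Nat.eq_zero_or_pos jf.val with h | h
      · exact absurd (Fin.ext (by simp [h])) hjf0
      · exact h
    have hneg : rotW v (-jf) = v := by
      have h1 : rotW (rotW v jf) (-jf) = v := by
        rw [rotW_rotW, neg_add_cancel, rotW_zero]
      rwa [hjf] at h1
    have hnegv : (-jf).val = n - jf.val := by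
      rw [Fin.neg_def]
      simp only []
      rw [Nat.mod_eq_of_lt (by omega : n - jf.val < n)]
    rcases le_or_gt jf.val (n / 2) with hh | hh
    · exact Finset.mem_biUnion.mpr ⟨jf.val, Finset.mem_Icc.mpr ⟨hjfv, hh⟩, mem_fixB_of_rot hjf⟩
    · refine Finset.mem_biUnion.mpr ⟨(-jf).val, Finset.mem_Icc.mpr ⟨?_, ?_⟩, mem_fixB_of_rot hneg⟩
      · omega
      · omega
  calc (perW n).card ≤ _ := card_le_card hsub
    _ ≤ ∑ j ∈ Finset.Icc 1 (n / 2), (fixB n j).card := card_biUnion_le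
    _ ≤ ∑ j ∈ Finset.Icc 1 (n / 2), 2 ^ (n / 2) :=
        Finset.sum_le_sum (fun j hj => card_fixB (Finset.mem_Icc.mp hj).1 (Finset.mem_Icc.mp hj).2)
    _ ≤ n * 2 ^ (n / 2) := by
        rw [Finset.sum_const, Nat.card_Icc]
        have : n / 2 + 1 - 1 ≤ n := by omega
        exact Nat.mul_le_mul_right _ this

lemma total_lower : 2 ^ n ≤ n * ((lyndonWords 2 n).card + (perW n).card) := by
  classical
  have hexists : ∀ w : Fin n → Fin 2, ∃ vj : (Fin n → Fin 2) × Fin n,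
      vj.1 ∈ lyndonWords 2 n ∪ perW n ∧ rotW vj.1 vj.2 = w := by
    intro w
    obtain ⟨j0, -, hmin⟩ := Finset.exists_min_image (univ : Finset (Fin n))
      (fun j => List.ofFn (rotW w j)) ⟨0, mem_univ 0⟩
    set v := rotW w j0 with hv
    have hmin' : ∀ j : Fin n, ¬ List.Lex (·<·) (List.ofFn (rotW v j)) (List.ofFn v) := by
      intro j
      rw [hv, rotW_rotW]
      exact not_lt.mpr (hmin (j + j0) (mem_univ _))
    have hback : rotW v (-j0) = w := by
      rw [hv, rotW_rotW, neg_add_cancel, rotW_zero]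
    rcases min_rot_lyndon_or_periodic hmin' with h | h
    · exact ⟨(v, -j0), Finset.mem_union_left _ (Finset.mem_filter.mpr ⟨mem_univ _, h⟩), hback⟩
    · obtain ⟨j, hj0, hj⟩ := h
      exact ⟨(v, -j0), Finset.mem_union_right _
        (Finset.mem_filter.mpr ⟨mem_univ _, j, hj0, hj⟩), hback⟩
  choose g hg1 hg2 using hexists
  have hcard := Finset.card_le_card_of_injOn g
    (s := (univ : Finset (Fin n → Fin 2)))
    (t := (lyndonWords 2 n ∪ perW n) ×ˢ (univ : Finset (Fin n)))
    (fun w _ => Finset.mem_product.mpr ⟨hg1 w, mem_univ _⟩)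
    (by
      intro w _ w' _ he
      rw [← hg2 w, ← hg2 w', he])
  rw [Finset.card_univ, Fintype.card_fun, Finset.card_product, Finset.card_univ] at hcard
  simp only [Fintype.card_fin] at hcard
  calc (2:ℕ) ^ n ≤ (lyndonWords 2 n ∪ perW n).card * n := hcard
    _ ≤ ((lyndonWords 2 n).card + (perW n).card) * n :=
        Nat.mul_le_mul_right _ (Finset.card_union_le _ _)
    _ = n * ((lyndonWords 2 n).card + (perW n).card) := Nat.mul_comm _ _

end Count

section Arith

lemma pow_aux : ∀ m : ℕ, 32 ≤ m → 18 * m ^ 2 ≤ 2 ^ m := by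
  intro m hm
  induction m, hm using Nat.le_induction with
  | base => norm_num
  | succ m hm ih =>
      have h1 : (m + 1) ^ 2 ≤ 2 * m ^ 2 := by nlinarith
      calc 18 * (m + 1) ^ 2 ≤ 18 * (2 * m ^ 2) := by nlinarith
        _ = 2 * (18 * m ^ 2) := by ring
        _ ≤ 2 * 2 ^ m := by omega
        _ = 2 ^ (m + 1) := by ring

lemma lyndon_lower {n : ℕ} [NeZero n] (hn : 64 ≤ n) :
    2 ^ (n - 1) ≤ n * (lyndonWords 2 n).card := by
  have htot := total_lower (n := n)
  have hper := card_perW (n := n)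
  set mm := n / 2 with hmm
  have hm32 : 32 ≤ mm := by omega
  have haux := pow_aux mm hm32
  have hn3 : n ≤ 3 * mm := by omega
  have h9 : n ^ 2 ≤ 9 * mm ^ 2 := by nlinarith
  have h9' : 9 * mm ^ 2 ≤ 2 ^ (mm - 1) := by
    have h2 : 2 * (9 * mm ^ 2) ≤ 2 * 2 ^ (mm - 1) := by
      have : (2:ℕ) * 2 ^ (mm - 1) = 2 ^ mm := by
        rw [← pow_succ']
        congr 1
        omega
      omega
    omega
  have hmle : mm - 1 ≤ n - 1 - mm := by omega
  have hkey : n ^ 2 * 2 ^ mm ≤ 2 ^ (n - 1) := by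
    calc n ^ 2 * 2 ^ mm ≤ 2 ^ (n - 1 - mm) * 2 ^ mm := by
          have : n ^ 2 ≤ 2 ^ (n - 1 - mm) :=
            le_trans h9 (le_trans h9' (Nat.pow_le_pow_right (by norm_num) hmle))
          exact Nat.mul_le_mul_right _ this
      _ = 2 ^ (n - 1) := by rw [← pow_add]; congr 1; omega
  have hP : n * (perW n).card ≤ 2 ^ (n - 1) := by
    calc n * (perW n).card ≤ n * (n * 2 ^ mm) := Nat.mul_le_mul_left _ hper
      _ = n ^ 2 * 2 ^ mm := by ring
      _ ≤ 2 ^ (n - 1) := hkey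
  have h2n : (2:ℕ) ^ n = 2 ^ (n - 1) + 2 ^ (n - 1) := by
    have : (2:ℕ) ^ n = 2 * 2 ^ (n - 1) := by
      rw [← pow_succ']; congr 1; omega
    omega
  have := htot
  rw [Nat.mul_add] at this
  omega

end Arith

theorem stmt_12 (A : ℝ) (hA1 : 1 < A) (hA2 : A ≤ 2) :
    (∀ n : ℕ,
      (((lyndonWords 2 n).filter fun w =>
          A * (Real.log n / Real.log 2) ≤ (maxRunOf (0 : Fin 2) (List.ofFn w) : ℝ)).card : ℝ)
        / ((lyndonWords 2 n).card : ℝ)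
      ≤ (((lyndonWords 2 n).filter fun w =>
          A * (Real.log n / Real.log 2) ≤ (maxRun (List.ofFn w) : ℝ)).card : ℝ)
        / ((lyndonWords 2 n).card : ℝ))
    ∧ ∃ K : ℝ, 0 < K ∧ ∃ n₀ : ℕ, ∀ n : ℕ, n₀ ≤ n →
        (((lyndonWords 2 n).filter fun w =>
            A * (Real.log n / Real.log 2) ≤ (maxRun (List.ofFn w) : ℝ)).card : ℝ)
          / ((lyndonWords 2 n).card : ℝ)
        ≤ K * (n : ℝ) ^ (1 - A) := by
  constructor
  · -- part 1 : monotonicity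
    intro n
    have hsub : ((lyndonWords 2 n).filter fun w =>
          A * (Real.log n / Real.log 2) ≤ (maxRunOf (0 : Fin 2) (List.ofFn w) : ℝ)) ⊆
        ((lyndonWords 2 n).filter fun w =>
          A * (Real.log n / Real.log 2) ≤ (maxRun (List.ofFn w) : ℝ)) := by
      intro w hw
      rw [Finset.mem_filter] at hw ⊢
      refine ⟨hw.1, le_trans hw.2 ?_⟩
      exact_mod_cast Nat.cast_le.mpr (maxRunOf_le_maxRun (List.ofFn w) (0 : Fin 2))
    have hcard : ((((lyndonWords 2 n).filter fun w =>
          A * (Real.log n / Real.log 2) ≤ (maxRunOf (0 : Fin 2) (List.ofFn w) : ℝ)).card : ℝ)) ≤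
        (((lyndonWords 2 n).filter fun w =>
          A * (Real.log n / Real.log 2) ≤ (maxRun (List.ofFn w) : ℝ)).card : ℝ) :=
      Nat.cast_le.mpr (Finset.card_le_card hsub)
    exact div_le_div_of_nonneg_right hcard (Nat.cast_nonneg _)
  · -- part 2 : the asymptotic bound
    refine ⟨4, by norm_num, 64, fun n hn => ?_⟩
    haveI : NeZero n := ⟨by omega⟩
    have hn0 : (0:ℝ) < n := by positivity
    have hn1 : (1:ℝ) < n := by exact_mod_cast (by omega : 1 < n)
    have hlogn : 0 < Real.log n := Real.log_pos hn1
    have hlog2 : 0 < Real.log 2 := Real.log_pos (by norm_num)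
    set x := A * (Real.log n / Real.log 2) with hx
    have hx0 : 0 < x := by positivity
    set m := ⌈x⌉₊ with hmdef
    have hxm : x ≤ m := Nat.le_ceil x
    -- 2 ^ m ≥ n ^ A
    have hpow : (n:ℝ) ^ A ≤ (2:ℝ) ^ m := by
      have h1 : (n:ℝ) ^ A = (2:ℝ) ^ x := by
        rw [Real.rpow_def_of_pos hn0, Real.rpow_def_of_pos (by norm_num : (0:ℝ) < 2), hx]
        congr 1
        field_simp
      rw [h1, ← Real.rpow_natCast 2 m]
      exact Real.rpow_le_rpow_of_exponent_le (by norm_num) hxm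
    have hrpow_pos : (0:ℝ) < (n:ℝ) ^ A := Real.rpow_pos_of_pos hn0 A
    set num := ((lyndonWords 2 n).filter fun w =>
        A * (Real.log n / Real.log 2) ≤ (maxRun (List.ofFn w) : ℝ)).card with hnum
    set den := (lyndonWords 2 n).card with hden
    have hdenlow : (2:ℕ) ^ (n - 1) ≤ n * den := lyndon_lower (by omega)
    have hden0 : (0:ℝ) < den := by
      have : 1 ≤ n * den := le_trans (Nat.one_le_two_pow) hdenlow
      have : 1 ≤ den := by
        by_contra h
        push_neg at h
        interval_cases den <;> omega
      exact_mod_cast (by omega : 0 < den)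
    rcases le_or_gt m n with hmn | hmn
    · -- main case
      have hnumbound : num ≤ 2 * 2 ^ (n - m) := by
        have hF : ∀ w ∈ (lyndonWords 2 n).filter (fun w =>
            A * (Real.log n / Real.log 2) ≤ (maxRun (List.ofFn w) : ℝ)),
            IsLyndon (List.ofFn w) ∧ w ∈ cycE n m := by
          intro w hw
          rw [Finset.mem_filter] at hw
          constructor
          · have := hw.1
            rw [lyndonWords, Finset.mem_filter] at this
            exact this.2
          · apply mem_cycE_of_maxRun
            rw [← hx] at hw
            exact Nat.ceil_le.mpr (by exact_mod_cast hw.2)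
        have h1 := card_mul_le_cycE _ hF
        have h2 := card_cycE (n := n) hmn
        have h3 : num * n ≤ (2 * 2 ^ (n - m)) * n := by
          calc num * n ≤ (cycE n m).card := h1
            _ ≤ 2 * n * 2 ^ (n - m) := h2
            _ = (2 * 2 ^ (n - m)) * n := by ring
        exact Nat.le_of_mul_le_mul_right h3 (by omega)
      -- real chain
      have hnumR : (num:ℝ) ≤ 2 * 2 ^ (n - m) := by exact_mod_cast hnumbound
      have hdenR : (2:ℝ) ^ (n - 1) / n ≤ den := by
        rw [div_le_iff₀ hn0]
        calc (2:ℝ) ^ (n - 1) ≤ (n:ℝ) * den := by exact_mod_cast hdenlow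
          _ = den * n := by ring
      have hd0 : (0:ℝ) < (2:ℝ) ^ (n - 1) / n := by positivity
      have hmain : (num:ℝ) / den ≤ (2 * 2 ^ (n - m)) / ((2:ℝ) ^ (n - 1) / n) :=
        div_le_div₀ (by positivity) hnumR hd0 hdenR
      have heq : (2 * (2:ℝ) ^ (n - m)) / ((2:ℝ) ^ (n - 1) / n) = 4 * n / 2 ^ m := by
        rw [pow_sub₀ (2:ℝ) (by norm_num) hmn, pow_sub₀ (2:ℝ) (by norm_num) (by omega : 1 ≤ n)]
        have h2n : (2:ℝ) ^ n ≠ 0 := by positivity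
        have h2m : (2:ℝ) ^ m ≠ 0 := by positivity
        field_simp
        ring
      have hlast : 4 * (n:ℝ) / 2 ^ m ≤ 4 * n ^ (1 - A) := by
        have h1 : 4 * (n:ℝ) / 2 ^ m ≤ 4 * n / n ^ A := by
          apply div_le_div_of_nonneg_left (by positivity) hrpow_pos hpow
        have h2 : 4 * (n:ℝ) / n ^ A = 4 * n ^ (1 - A) := by
          rw [Real.rpow_sub hn0, Real.rpow_one]
          ring
        rw [← h2]
        exact h1
      calc (num:ℝ) / den ≤ _ := hmain
        _ = 4 * n / 2 ^ m := heq
        _ ≤ 4 * n ^ (1 - A) := hlast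
    · -- degenerate case : threshold exceeds n, filter is empty
      have hempty : ((lyndonWords 2 n).filter fun w =>
          A * (Real.log n / Real.log 2) ≤ (maxRun (List.ofFn w) : ℝ)) = ∅ := by
        rw [Finset.filter_eq_empty_iff]
        intro w hw
        rw [← hx]
        intro hcon
        have hle : maxRun (List.ofFn w) ≤ n := by
          have := maxRun_le_length (List.ofFn w)
          simpa using this
        have : m ≤ n := Nat.ceil_le.mpr (le_trans hcon (by exact_mod_cast hle))
        omega
      rw [hnum, hempty]
      simp only [Finset.card_empty, Nat.cast_zero, zero_div]
      positivity
end

section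
/- Let w be a primitive word of length n over the alphabet {a, b}, with runs of lengths X_1(w),…,X_{N_n}(w) in order of appearance, and let ρ(w) be the unique Lyndon word in its cyclic-shift orbit. Then the longest-run lengths satisfy M_n(ρ(w)) ≤ max{ M_n(w), X_1(w) + X_{N_n}(w) }. -/
open scoped Classical

/-- The length of the first run of a word (0 for the empty word). -/
def firstRunLen {α : Type*} [DecidableEq α] : List α → ℕ
  | [] => 0
  | (c :: rest) => ((c :: rest).takeWhile (· = c)).length

/-- The length of the last run of a word (0 for the empty word). -/
def lastRunLen {α : Type*} [DecidableEq α] (l : List α) : ℕ :=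
  firstRunLen l.reverse

lemma takeWhile_len_of_replicate_prefix {α : Type*} [DecidableEq α] :
    ∀ (j : ℕ) (c : α) (w : List α), List.replicate j c <+: w →
      j ≤ (w.takeWhile (· = c)).length := by
  intro j
  induction j with
  | zero => intro c w _; exact Nat.zero_le _
  | succ j ih =>
    intro c w h
    rw [List.replicate_succ] at h
    rcases h with ⟨t, ht⟩
    cases w with
    | nil => simp at ht
    | cons a w' =>
      rw [List.cons_append] at ht
      injection ht with h1 h2
      subst h1
      rw [List.takeWhile_cons]
      simp only [decide_true, if_true, List.length_cons]
      exact Nat.succ_le_succ (ih c w' ⟨t, h2⟩)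

lemma replicate_prefix_le_firstRun {α : Type*} [DecidableEq α] (j : ℕ) (c : α)
    (w : List α) (h : List.replicate j c <+: w) : j ≤ firstRunLen w := by
  rcases Nat.eq_zero_or_pos j with hj | hj
  · omega
  · cases w with
    | nil =>
      have := h.length_le
      simp at this; omega
    | cons a w' =>
      have hac : a = c := by
        rcases h with ⟨t, ht⟩
        cases j with
        | zero => omega
        | succ j =>
          rw [List.replicate_succ, List.cons_append] at ht
          exact (List.head_eq_of_cons_eq ht.symm)
      subst hac
      exact takeWhile_len_of_replicate_prefix j a (a :: w') h

lemma replicate_suffix_le_lastRun {α : Type*} [DecidableEq α] (j : ℕ) (c : α)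
    (w : List α) (h : List.replicate j c <:+ w) : j ≤ lastRunLen w := by
  apply replicate_prefix_le_firstRun j c
  rw [← List.reverse_replicate (n := j) (a := c)]
  exact List.reverse_prefix.mpr h

lemma infix_append_split {α : Type*} {t A B : List α} (h : t <:+: A ++ B) :
    t <:+: A ∨ t <:+: B ∨ ∃ t₁ t₂, t = t₁ ++ t₂ ∧ t₁ <:+ A ∧ t₂ <+: B := by
  rcases h with ⟨u, v, huv⟩
  rw [List.append_assoc] at huv
  rcases List.append_eq_append_iff.mp huv with ⟨a', ha1, ha2⟩ | ⟨c', hc1, hc2⟩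
  · rcases List.append_eq_append_iff.mp ha2 with ⟨d, hd1, hd2⟩ | ⟨d, hd1, hd2⟩
    · -- a' = t ++ d, v = d ++ B : t infix of A
      left
      exact ⟨u, d, by rw [ha1, hd1, List.append_assoc]⟩
    · -- t = a' ++ d, B = d ++ v : a' suffix of A, d prefix of B
      right; right
      exact ⟨a', d, hd1, ⟨u, ha1.symm⟩, ⟨v, hd2.symm⟩⟩
  · -- u = A ++ c', B = c' ++ (t ++ v) : t infix of B
    right; left
    exact ⟨c', v, by rw [hc2, List.append_assoc]⟩

lemma le_maxRun_of_infix {α : Type*} {m : ℕ} {c : α} {w : List α}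
    (h : List.replicate m c <:+: w) : m ≤ maxRun w := by
  apply le_csSup
  · exact ⟨w.length, fun x ⟨d, hd⟩ => by simpa using hd.length_le⟩
  · exact ⟨c, h⟩

theorem stmt_16 (w : List (Fin 2)) (hw : IsPrimitive w) (k : ℕ) (hk : k < w.length)
    (hL : IsLyndon (w.rotate k)) :
    maxRun (w.rotate k) ≤ max (maxRun w) (firstRunLen w + lastRunLen w) := by
  apply csSup_le
  · exact ⟨0, 0, by simp⟩
  · rintro m ⟨c, hm⟩
    rw [List.rotate_eq_drop_append_take (le_of_lt hk)] at hm
    rcases infix_append_split hm with h | h | ⟨t₁, t₂, heq, hs, hp⟩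
    · exact le_max_of_le_left (le_maxRun_of_infix (h.trans (List.drop_suffix k w).isInfix))
    · exact le_max_of_le_left (le_maxRun_of_infix (h.trans (List.take_prefix k w).isInfix))
    · have hlen : m = t₁.length + t₂.length := by
        have := congrArg List.length heq
        simpa using this
      have ht₁ : t₁ = List.replicate t₁.length c := by
        have : t₁ = (List.replicate m c).take t₁.length := by
          rw [heq, List.take_left]
        rw [this, List.take_replicate, min_eq_left (by omega : t₁.length ≤ m)]
        simp
      have ht₂ : t₂ = List.replicate t₂.length c := by
        have : t₂ = (List.replicate m c).drop t₁.length := by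
          rw [heq, List.drop_left]
        rw [this, List.drop_replicate, (by omega : m - t₁.length = t₂.length)]
        simp
      have h1 : t₁.length ≤ lastRunLen w := by
        apply replicate_suffix_le_lastRun t₁.length c
        rw [← ht₁]
        exact hs.trans (List.drop_suffix k w)
      have h2 : t₂.length ≤ firstRunLen w := by
        apply replicate_prefix_le_firstRun t₂.length c
        rw [← ht₂]
        exact hp.trans (List.take_prefix k w)
      exact le_max_of_le_right (by omega)
end
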